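/- arXiv:0911.4366 — 6 statements merged into one kernel-verified Lean document; each statement's English description precedes it below -/
import Mathlib

section
/- Let G be a finite simple graph with minimum degree at least 3, let u be a vertex of G, and for each integer d ≥ 0 let N_d be the set of vertices at graph distance exactly d from u. Let d ≥ 2. If G contains no diamond with at most 3d + 2 edges, then |N_d| ≥ (3/2)·|N_{d−2}|. -/
open SimpleGraph

variable {V : Type*}

/-- A diamond in a simple graph: two distinct vertices joined by three pairwise
internally vertex-disjoint paths. -/
structure SimpleGraph.Diamond (G : SimpleGraph V) where
  u : V
  v : V
  ne : u ≠ v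
  p₁ : G.Walk u v
  p₂ : G.Walk u v
  p₃ : G.Walk u v
  h₁ : p₁.IsPath
  h₂ : p₂.IsPath
  h₃ : p₃.IsPath
  ne₁₂ : p₁ ≠ p₂
  ne₁₃ : p₁ ≠ p₃
  ne₂₃ : p₂ ≠ p₃
  disj₁₂ : ∀ x, x ∈ p₁.support → x ∈ p₂.support → x = u ∨ x = v
  disj₁₃ : ∀ x, x ∈ p₁.support → x ∈ p₃.support → x = u ∨ x = v
  disj₂₃ : ∀ x, x ∈ p₂.support → x ∈ p₃.support → x = u ∨ x = v

/-- The number of edges of a diamond. -/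
def SimpleGraph.Diamond.size {G : SimpleGraph V} (D : G.Diamond) : ℕ :=
  D.p₁.length + D.p₂.length + D.p₃.length

/-- The vertex set of a diamond. -/
def SimpleGraph.Diamond.vertexSet {G : SimpleGraph V} (D : G.Diamond) : Set V :=
  {x | x ∈ D.p₁.support ∨ x ∈ D.p₂.support ∨ x ∈ D.p₃.support}

/-- The edge set of a diamond. -/
def SimpleGraph.Diamond.edgeSet {G : SimpleGraph V} (D : G.Diamond) : Set (Sym2 V) :=
  {e | e ∈ D.p₁.edges ∨ e ∈ D.p₂.edges ∨ e ∈ D.p₃.edges}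

/-- A set of vertices hitting every diamond of `G`. -/
def SimpleGraph.IsDiamondHittingSet (G : SimpleGraph V) (X : Set V) : Prop :=
  ∀ D : G.Diamond, ∃ x ∈ X, x ∈ D.vertexSet

/-- The cycles of `G`, identified with their edge sets. -/
def SimpleGraph.cycleSet (G : SimpleGraph V) : Set (Set (Sym2 V)) :=
  {s | ∃ (v : V) (w : G.Walk v v), w.IsCycle ∧ s = {e | e ∈ w.edges}}

/-- The cycles of length `i` of `G`, identified with their edge sets. -/
def SimpleGraph.cycleSetLen (G : SimpleGraph V) (i : ℕ) : Set (Set (Sym2 V)) :=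
  {s | ∃ (v : V) (w : G.Walk v v), w.IsCycle ∧ w.length = i ∧ s = {e | e ∈ w.edges}}

/-- The cycles of length `i` of `G` passing through `v`, identified with their edge sets. -/
def SimpleGraph.cycleSetLenThrough (G : SimpleGraph V) (i : ℕ) (v : V) : Set (Set (Sym2 V)) :=
  {s | ∃ w : G.Walk v v, w.IsCycle ∧ w.length = i ∧ s = {e | e ∈ w.edges}}

/-- The set of vertices at distance exactly `d` from `u`. -/
def SimpleGraph.sphere (G : SimpleGraph V) (u : V) (d : ℕ) : Set V :=
  {w | G.Reachable u w ∧ G.dist u w = d}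

open Walk

section Prelim
variable [DecidableEq V] {G : SimpleGraph V}

namespace SimpleGraph.Walk

omit [DecidableEq V] in
lemma isPath_append' {a b c : V} {p : G.Walk a b} {q : G.Walk b c}
    (hp : p.IsPath) (hq : q.IsPath)
    (h : ∀ x, x ∈ p.support → x ∈ q.support → x = b) : (p.append q).IsPath := by
  rw [isPath_def, support_append]
  refine List.Nodup.append hp.support_nodup (hq.support_nodup.tail) ?_
  intro x hxp hxq
  have hxq' : x ∈ q.support := by rw [support_eq_cons]; exact List.mem_cons_of_mem _ hxq
  have hb : x = b := h x hxp hxq'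
  subst hb
  have := hq.support_nodup
  rw [support_eq_cons] at this
  exact (List.nodup_cons.mp this).1 hxq

omit [DecidableEq V] in
lemma inter_eq_of_append_isPath {a b c : V} {p : G.Walk a b} {q : G.Walk b c}
    (h : (p.append q).IsPath) : ∀ x, x ∈ p.support → x ∈ q.support → x = b := by
  intro x hxp hxq
  have hn := h.support_nodup
  rw [support_append] at hn
  by_contra hne
  have hxq' : x ∈ q.support.tail := by
    rw [support_eq_cons, List.mem_cons] at hxq
    rcases hxq with h1 | h1
    · exact absurd h1 hne
    · exact h1
  exact (List.disjoint_of_nodup_append hn) hxp hxq'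

omit [DecidableEq V] in
lemma exists_first_hit {a b : V} (p : G.Walk a b) (S : Set V) (hb : b ∈ S) :
    ∃ (c : V) (_ : c ∈ S) (p₁ : G.Walk a c) (p₂ : G.Walk c b),
      p = p₁.append p₂ ∧ (∀ x, x ∈ p₁.support → x ∈ S → x = c) := by
  classical
  induction p with
  | nil =>
    exact ⟨_, hb, Walk.nil, Walk.nil, rfl, fun x hx _ => by simpa using hx⟩
  | @cons u v w h q ih =>
    by_cases hu : u ∈ S
    · exact ⟨u, hu, Walk.nil, Walk.cons h q, rfl, fun x hx _ => by simpa using hx⟩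
    · obtain ⟨c, hc, p₁, p₂, heq, hfirst⟩ := ih hb
      refine ⟨c, hc, Walk.cons h p₁, p₂, by rw [Walk.cons_append, heq], ?_⟩
      intro x hx hxS
      rw [support_cons, List.mem_cons] at hx
      rcases hx with rfl | hx
      · exact absurd hxS hu
      · exact hfirst x hx hxS

lemma inter_take_drop {a b : V} {p : G.Walk a b} (hp : p.IsPath) {t : V} (h : t ∈ p.support) :
    ∀ x, x ∈ (p.takeUntil t h).support → x ∈ (p.dropUntil t h).support → x = t := by
  apply inter_eq_of_append_isPath
  rwa [take_spec p h]

lemma length_take_add_drop {a b : V} (p : G.Walk a b) {t : V} (h : t ∈ p.support) :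
    (p.takeUntil t h).length + (p.dropUntil t h).length = p.length := by
  conv_rhs => rw [← take_spec p h]
  rw [length_append]

end SimpleGraph.Walk

end Prelim

section Extract
variable [DecidableEq V] {G : SimpleGraph V}

/-- helper for disjointness goals -/
private lemma disj_cons {v x y c : V} (e1 : G.Adj v x) (e2 : G.Adj v y)
    {p : G.Walk x c} {q : G.Walk y c}
    (h : ∀ t, t ∈ p.support → t ∈ q.support → t = c) :
    ∀ t, t ∈ (Walk.cons e1 p).support → t ∈ (Walk.cons e2 q).support → t = v ∨ t = c := by
  intro t ht1 ht2
  rw [support_cons, List.mem_cons] at ht1 ht2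
  rcases ht1 with rfl | ht1
  · exact Or.inl rfl
  rcases ht2 with rfl | ht2
  · exact Or.inl rfl
  exact Or.inr (h t ht1 ht2)

private lemma mk_diamond {v c x y z : V} (hvc : v ≠ c)
    (e1 : G.Adj v x) (e2 : G.Adj v y) (e3 : G.Adj v z)
    (hxy : x ≠ y) (hxz : x ≠ z) (hyz : y ≠ z)
    {P1 : G.Walk x c} {P2 : G.Walk y c} {P3 : G.Walk z c}
    (hp1 : P1.IsPath) (hp2 : P2.IsPath) (hp3 : P3.IsPath)
    (hv1 : v ∉ P1.support) (hv2 : v ∉ P2.support) (hv3 : v ∉ P3.support)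
    (d12 : ∀ t, t ∈ P1.support → t ∈ P2.support → t = c)
    (d13 : ∀ t, t ∈ P1.support → t ∈ P3.support → t = c)
    (d23 : ∀ t, t ∈ P2.support → t ∈ P3.support → t = c) :
    ∃ D : G.Diamond, D.size = P1.length + P2.length + P3.length + 3 := by
  refine ⟨⟨v, c, hvc, Walk.cons e1 P1, Walk.cons e2 P2, Walk.cons e3 P3,
    hp1.cons hv1, hp2.cons hv2, hp3.cons hv3,
    fun h => hxy (by injection h), fun h => hxz (by injection h), fun h => hyz (by injection h),
    disj_cons e1 e2 d12, disj_cons e1 e3 d13, disj_cons e2 e3 d23⟩, ?_⟩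
  simp [SimpleGraph.Diamond.size, Walk.length_cons]
  omega

private lemma diamond_aux {v u x y z c : V}
    (e1 : G.Adj v x) (e2 : G.Adj v y) (e3 : G.Adj v z)
    (hxy : x ≠ y) (hxz : x ≠ z) (hyz : y ≠ z)
    (Q1 : G.Walk x u) (Q2 : G.Walk y u) (B1 : G.Walk z c)
    (h1 : (Walk.cons e1 Q1).IsPath) (h2 : (Walk.cons e2 Q2).IsPath)
    (hB1p : B1.IsPath) (hvB1 : v ∉ B1.support)
    (hc1 : c ∈ Q1.support)
    (hB1f : ∀ t, t ∈ B1.support → (t ∈ Q1.support ∨ t ∈ Q2.support) → t = c) :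
    ∃ D : G.Diamond, D.size ≤ Q1.length + Q2.length + B1.length + 3 := by
  rw [Walk.cons_isPath_iff] at h1 h2
  obtain ⟨hQ1p, hv1⟩ := h1
  obtain ⟨hQ2p, hv2⟩ := h2
  have hvc : v ≠ c := fun h => hv1 (h ▸ hc1)
  -- first hit of Q2 on Q1.support
  obtain ⟨a, haQ1, D1, D2, hQ2eq, hD1f⟩ :=
    Q2.exists_first_hit {t | t ∈ Q1.support} (Q1.end_mem_support)
  have hD1p : D1.IsPath := Walk.IsPath.of_append_left (hQ2eq ▸ hQ2p)
  have sD1 : ∀ t, t ∈ D1.support → t ∈ Q2.support := by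
    intro t ht; rw [hQ2eq, Walk.mem_support_append_iff]; exact Or.inl ht
  have hvD1 : v ∉ D1.support := fun h => hv2 (sD1 v h)
  have hvaQ : a ∈ Q1.support := haQ1
  have hva : v ≠ a := fun h => hv1 (h ▸ hvaQ)
  have hlenD1 : D1.length ≤ Q2.length := by
    have := Walk.length_append D1 D2
    rw [← hQ2eq] at this; omega
  set E1 := Q1.takeUntil a haQ1 with hE1def
  set E2 := Q1.dropUntil a haQ1 with hE2def
  have hE1p : E1.IsPath := hQ1p.takeUntil haQ1
  have hE2p : E2.IsPath := hQ1p.dropUntil haQ1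
  have sE1 : ∀ t, t ∈ E1.support → t ∈ Q1.support := fun t ht => Walk.support_takeUntil_subset _ haQ1 ht
  have sE2 : ∀ t, t ∈ E2.support → t ∈ Q1.support := fun t ht => Walk.support_dropUntil_subset _ haQ1 ht
  have interE : ∀ t, t ∈ E1.support → t ∈ E2.support → t = a := Walk.inter_take_drop hQ1p haQ1
  have hlenE : E1.length + E2.length = Q1.length := Walk.length_take_add_drop Q1 haQ1
  rcases eq_or_ne c a with rfl | hca
  · -- case c = a
    obtain ⟨D, hD⟩ := mk_diamond hvc e1 e2 e3 hxy hxz hyz hE1p hD1p hB1p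
      (fun h => hv1 (sE1 v h)) hvD1 hvB1
      (fun t ht1 ht2 => hD1f t ht2 (sE1 t ht1))
      (fun t ht1 ht2 => hB1f t ht2 (Or.inl (sE1 t ht1)))
      (fun t ht1 ht2 => hB1f t ht2 (Or.inr (sD1 t ht1)))
    refine ⟨D, ?_⟩
    rw [hD]
    have := Walk.length_takeUntil_le Q1 haQ1
    omega
  · -- c ≠ a; locate c in E1 or E2
    have hcsplit : c ∈ E1.support ∨ c ∈ E2.support := by
      have : c ∈ (E1.append E2).support := by rw [Walk.take_spec]; exact hc1
      rw [Walk.mem_support_append_iff] at this; exact this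
    have hanotF1 : True := trivial
    rcases hcsplit with hcE1 | hcE2
    · -- case (1): c strictly before a on Q1
      set F1 := E1.takeUntil c hcE1 with hF1def
      set F2 := E1.dropUntil c hcE1 with hF2def
      have hF1p : F1.IsPath := hE1p.takeUntil hcE1
      have hF2p : F2.IsPath := hE1p.dropUntil hcE1
      have sF1 : ∀ t, t ∈ F1.support → t ∈ E1.support := fun t ht => Walk.support_takeUntil_subset _ hcE1 ht
      have sF2 : ∀ t, t ∈ F2.support → t ∈ E1.support := fun t ht => Walk.support_dropUntil_subset _ hcE1 ht
      have interF : ∀ t, t ∈ F1.support → t ∈ F2.support → t = c := Walk.inter_take_drop hE1p hcE1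
      have hlenF : F1.length + F2.length = E1.length := Walk.length_take_add_drop E1 hcE1
      have haF1 : a ∉ F1.support := by
        intro h
        exact hca (interF a h (Walk.end_mem_support F2)).symm
      have memF2 : ∀ t, t ∈ F2.reverse.support → t ∈ F2.support := by
        intro t ht; rwa [Walk.support_reverse, List.mem_reverse] at ht
      have hP3p : (D1.append F2.reverse).IsPath := by
        refine Walk.isPath_append' hD1p ((Walk.isPath_reverse_iff F2).mpr hF2p) ?_
        intro t ht1 ht2
        exact hD1f t ht1 (sE1 t (sF2 t (memF2 t ht2)))
      have hvP3 : v ∉ (D1.append F2.reverse).support := by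
        rw [Walk.mem_support_append_iff]
        rintro (h | h)
        · exact hvD1 h
        · exact hv1 (sE1 v (sF2 v (memF2 v h)))
      obtain ⟨D, hD⟩ := mk_diamond hvc e1 e3 e2 hxz hxy hyz.symm
        hF1p hB1p hP3p (fun h => hv1 (sE1 v (sF1 v h))) hvB1 hvP3
        (fun t ht1 ht2 => hB1f t ht2 (Or.inl (sE1 t (sF1 t ht1))))
        (fun t ht1 ht2 => by
          rw [Walk.mem_support_append_iff] at ht2
          rcases ht2 with h | h
          · have hta := hD1f t h (sE1 t (sF1 t ht1))
            exact absurd (hta ▸ ht1) haF1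
          · exact interF t ht1 (memF2 t h))
        (fun t ht1 ht2 => by
          rw [Walk.mem_support_append_iff] at ht2
          rcases ht2 with h | h
          · exact hB1f t ht1 (Or.inr (sD1 t h))
          · exact hB1f t ht1 (Or.inl (sE1 t (sF2 t (memF2 t h)))))
      refine ⟨D, ?_⟩
      rw [hD]
      have h5 : F1.length + F2.length ≤ Q1.length := by
        have := Walk.length_takeUntil_le Q1 haQ1; omega
      have h6 : (D1.append F2.reverse).length = D1.length + F2.length := by
        rw [Walk.length_append, Walk.length_reverse]
      omega
    · -- case (2): c on E2, c ≠ a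
      set G1 := E2.takeUntil c hcE2 with hG1def
      have hG1p : G1.IsPath := hE2p.takeUntil hcE2
      have sG1 : ∀ t, t ∈ G1.support → t ∈ E2.support := fun t ht => Walk.support_takeUntil_subset _ hcE2 ht
      have memG1 : ∀ t, t ∈ G1.reverse.support → t ∈ G1.support := by
        intro t ht; rwa [Walk.support_reverse, List.mem_reverse] at ht
      have hcnE1 : c ∉ E1.support := by
        intro h; exact hca (interE c h hcE2)
      have hcnD1 : c ∉ D1.support := by
        intro h; exact hca (hD1f c h hc1)
      -- third path : B1.append G1.reverse : z → c → a
      have hP3p : (B1.append G1.reverse).IsPath := by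
        refine Walk.isPath_append' hB1p ((Walk.isPath_reverse_iff G1).mpr hG1p) ?_
        intro t ht1 ht2
        exact hB1f t ht1 (Or.inl (sE2 t (sG1 t (memG1 t ht2))))
      have hvP3 : v ∉ (B1.append G1.reverse).support := by
        rw [Walk.mem_support_append_iff]
        rintro (h | h)
        · exact hvB1 h
        · exact hv1 (sE2 v (sG1 v (memG1 v h)))
      obtain ⟨D, hD⟩ := mk_diamond hva e1 e2 e3 hxy hxz hyz
        hE1p hD1p hP3p (fun h => hv1 (sE1 v h)) hvD1 hvP3
        (fun t ht1 ht2 => hD1f t ht2 (sE1 t ht1))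
        (fun t ht1 ht2 => by
          rw [Walk.mem_support_append_iff] at ht2
          rcases ht2 with h | h
          · have htc := hB1f t h (Or.inl (sE1 t ht1))
            exact absurd (htc ▸ ht1) hcnE1
          · exact interE t ht1 (sG1 t (memG1 t h)))
        (fun t ht1 ht2 => by
          rw [Walk.mem_support_append_iff] at ht2
          rcases ht2 with h | h
          · have htc := hB1f t h (Or.inr (sD1 t ht1))
            exact absurd (htc ▸ ht1) hcnD1
          · exact hD1f t ht1 (sE2 t (sG1 t (memG1 t h))))
      refine ⟨D, ?_⟩
      rw [hD]
      have h5 : G1.length ≤ E2.length := Walk.length_takeUntil_le E2 hcE2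
      have h6 : (B1.append G1.reverse).length = B1.length + G1.length := by
        rw [Walk.length_append, Walk.length_reverse]
      omega

/-- Extraction lemma: three paths from `v` to `u` through distinct neighbours yield a diamond
of size at most the total length. -/
lemma diamond_of_three_paths {v u x y z : V}
    (e1 : G.Adj v x) (e2 : G.Adj v y) (e3 : G.Adj v z)
    (hxy : x ≠ y) (hxz : x ≠ z) (hyz : y ≠ z)
    (Q1 : G.Walk x u) (Q2 : G.Walk y u) (Q3 : G.Walk z u)
    (h1 : (Walk.cons e1 Q1).IsPath) (h2 : (Walk.cons e2 Q2).IsPath)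
    (h3 : (Walk.cons e3 Q3).IsPath) :
    ∃ D : G.Diamond, D.size ≤ Q1.length + Q2.length + Q3.length + 3 := by
  have h3' := Walk.cons_isPath_iff e3 Q3 |>.mp h3
  obtain ⟨c, hcS, B1, B2, hQ3eq, hB1f⟩ :=
    Q3.exists_first_hit {t | t ∈ Q1.support ∨ t ∈ Q2.support}
      (Or.inl (Q1.end_mem_support))
  have hB1p : B1.IsPath := Walk.IsPath.of_append_left (hQ3eq ▸ h3'.1)
  have hvB1 : v ∉ B1.support := by
    intro h
    apply h3'.2
    rw [hQ3eq, Walk.mem_support_append_iff]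
    exact Or.inl h
  have hlenB1 : B1.length ≤ Q3.length := by
    have := Walk.length_append B1 B2
    rw [← hQ3eq] at this; omega
  rcases hcS with hc1 | hc2
  · obtain ⟨D, hD⟩ := diamond_aux e1 e2 e3 hxy hxz hyz Q1 Q2 B1 h1 h2 hB1p hvB1 hc1 hB1f
    exact ⟨D, by omega⟩
  · obtain ⟨D, hD⟩ := diamond_aux e2 e1 e3 hxy.symm hyz hxz Q2 Q1 B1 h2 h1 hB1p hvB1 hc2
      (fun t ht1 ht2 => hB1f t ht1 ht2.symm)
    exact ⟨D, by omega⟩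

end Extract

section Levels
variable {V : Type*} [DecidableEq V] {G : SimpleGraph V} {u : V}

lemma length_take_add_drop' {a b : V} (p : G.Walk a b) {t : V} (h : t ∈ p.support) :
    (p.takeUntil t h).length + (p.dropUntil t h).length = p.length := by
  conv_rhs => rw [← Walk.take_spec p h]
  rw [Walk.length_append]

lemma walk_len_one_adj {a b : V} (p : G.Walk a b) (h : p.length = 1) : G.Adj a b := by
  cases p with
  | nil => simp at h
  | cons e q =>
    cases q with
    | nil => exact e
    | cons e' q' => simp [Walk.length_cons] at h

/-- A reversed shortest path from `x` to `u` with strong avoidance properties. -/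
lemma exists_good_path (h : G.Reachable u x) :
    ∃ Q : G.Walk x u, Q.IsPath ∧ Q.length = G.dist u x ∧
      ∀ t, t ∈ Q.support → t ≠ x →
        G.dist u t < G.dist u x ∧ (G.dist u t + 1 = G.dist u x → G.Adj t x) := by
  obtain ⟨p, hp, hlen⟩ := h.exists_path_of_dist
  refine ⟨p.reverse, (Walk.isPath_reverse_iff p).mpr hp, by rw [Walk.length_reverse, hlen], ?_⟩
  intro t ht htx
  rw [Walk.support_reverse, List.mem_reverse] at ht
  have h1 : (p.takeUntil t ht).length = G.dist u t ∧
      G.dist u t + (p.dropUntil t ht).length = G.dist u x := by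
    have e1 : G.dist u t ≤ (p.takeUntil t ht).length := SimpleGraph.dist_le _
    have e2 : G.dist u x ≤ G.dist u t + (p.dropUntil t ht).length := by
      have hreach_t : G.Reachable u t := ⟨p.takeUntil t ht⟩
      obtain ⟨pt, _, hptlen⟩ := hreach_t.exists_path_of_dist
      have e2' := SimpleGraph.dist_le (pt.append (p.dropUntil t ht))
      rwa [Walk.length_append, hptlen] at e2'
    have e3 := length_take_add_drop' p ht
    omega
  have hdrop : 1 ≤ (p.dropUntil t ht).length := by
    by_contra hc
    push_neg at hc
    interval_cases hh : (p.dropUntil t ht).length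
    · exact htx (Walk.eq_of_length_eq_zero hh)
  constructor
  · omega
  · intro hone
    have : (p.dropUntil t ht).length = 1 := by omega
    exact walk_len_one_adj _ this

lemma reachable_adj (h : G.Reachable u x) (e : G.Adj x y) : G.Reachable u y :=
  h.trans ⟨Walk.cons e Walk.nil⟩

lemma dist_nbr_le (h : G.Reachable u x) (e : G.Adj x y) : G.dist u y ≤ G.dist u x + 1 := by
  obtain ⟨p, hp, hlen⟩ := h.exists_path_of_dist
  have := SimpleGraph.dist_le (p.concat e)
  rwa [Walk.length_concat, hlen] at this

lemma dist_nbr_ge (h : G.Reachable u x) (e : G.Adj x y) : G.dist u x ≤ G.dist u y + 1 :=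
  dist_nbr_le (reachable_adj h e) e.symm

lemma exists_parent (h : G.Reachable u x) (h1 : 1 ≤ G.dist u x) :
    ∃ p, G.Adj p x ∧ G.dist u p + 1 = G.dist u x ∧ G.Reachable u p := by
  obtain ⟨Q, hQp, hQlen, hQmem⟩ := exists_good_path h
  cases Q with
  | nil => rw [← hQlen] at h1; simp at h1
  | @cons a b c e q =>
    have hreachb : G.Reachable u b := (h.trans ⟨Walk.cons e q⟩).trans ⟨q.reverse⟩
    refine ⟨b, e.symm, ?_, hreachb⟩
    have hb : b ∈ (Walk.cons e q).support := by
      rw [Walk.support_cons, List.mem_cons]; right; exact q.start_mem_support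
    have hbx : b ≠ x := by
      rintro rfl
      exact e.ne' rfl
    have h2 := (hQmem b hb hbx).1
    have h3 : G.dist u x ≤ G.dist u b + 1 := dist_nbr_le hreachb e.symm
    omega

end Levels

section Claims
variable {V : Type*} [DecidableEq V] {G : SimpleGraph V} {u : V} {d : ℕ}

lemma no_diamond_three (hno : ¬ ∃ D : G.Diamond, D.size ≤ 3 * d + 2) {v x y z : V}
    (e1 : G.Adj v x) (e2 : G.Adj v y) (e3 : G.Adj v z)
    (hxy : x ≠ y) (hxz : x ≠ z) (hyz : y ≠ z)
    (Q1 : G.Walk x u) (Q2 : G.Walk y u) (Q3 : G.Walk z u)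
    (h1 : (Walk.cons e1 Q1).IsPath) (h2 : (Walk.cons e2 Q2).IsPath)
    (h3 : (Walk.cons e3 Q3).IsPath)
    (hsum : Q1.length + Q2.length + Q3.length + 3 ≤ 3 * d + 2) : False := by
  obtain ⟨D, hD⟩ := diamond_of_three_paths e1 e2 e3 hxy hxz hyz Q1 Q2 Q3 h1 h2 h3
  exact hno ⟨D, le_trans hD hsum⟩

/-- a good path from a neighbour `n` of `x` with `dist u n ≤ dist u x`, avoiding `x`,
together with the cons-path property. -/
lemma cons_good_path (hx : G.Reachable u x) (e : G.Adj x n) (hn : G.dist u n ≤ G.dist u x) :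
    ∃ Q : G.Walk n u, (Walk.cons e Q).IsPath ∧ Q.length = G.dist u n := by
  obtain ⟨Q, hQp, hQlen, hQmem⟩ := exists_good_path (reachable_adj hx e)
  refine ⟨Q, ?_, hQlen⟩
  rw [Walk.cons_isPath_iff]
  refine ⟨hQp, fun hmem => ?_⟩
  have hxn : x ≠ n := fun h => G.irrefl (h ▸ e)
  have := (hQmem x hmem hxn).1
  omega

lemma lows_helper (hno : ¬ ∃ D : G.Diamond, D.size ≤ 3 * d + 2)
    {x m₁ m₂ m₃ : V} (hx : G.Reachable u x) (hjd : G.dist u x ≤ d)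
    (e1 : G.Adj x m₁) (e2 : G.Adj x m₂) (e3 : G.Adj x m₃)
    (h12 : m₁ ≠ m₂) (h13 : m₁ ≠ m₃) (h23 : m₂ ≠ m₃)
    (hm1 : G.dist u m₁ < G.dist u x) (hm2 : G.dist u m₂ ≤ G.dist u x)
    (hm3 : G.dist u m₃ ≤ G.dist u x) : False := by
  obtain ⟨Q1, hQ1, hL1⟩ := cons_good_path hx e1 (le_of_lt hm1)
  obtain ⟨Q2, hQ2, hL2⟩ := cons_good_path hx e2 hm2
  obtain ⟨Q3, hQ3, hL3⟩ := cons_good_path hx e3 hm3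
  exact no_diamond_three hno e1 e2 e3 h12 h13 h23 Q1 Q2 Q3 hQ1 hQ2 hQ3 (by omega)

lemma three_lows_false (hno : ¬ ∃ D : G.Diamond, D.size ≤ 3 * d + 2)
    {x n₁ n₂ n₃ : V} (hx : G.Reachable u x) (hjd : G.dist u x ≤ d)
    (e1 : G.Adj x n₁) (e2 : G.Adj x n₂) (e3 : G.Adj x n₃)
    (h12 : n₁ ≠ n₂) (h13 : n₁ ≠ n₃) (h23 : n₂ ≠ n₃)
    (hm1 : G.dist u n₁ ≤ G.dist u x) (hm2 : G.dist u n₂ ≤ G.dist u x)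
    (hm3 : G.dist u n₃ ≤ G.dist u x) : False := by
  by_cases l1 : G.dist u n₁ < G.dist u x
  · exact lows_helper hno hx hjd e1 e2 e3 h12 h13 h23 l1 hm2 hm3
  by_cases l2 : G.dist u n₂ < G.dist u x
  · exact lows_helper hno hx hjd e2 e1 e3 h12.symm h23 h13 l2 hm1 hm3
  by_cases l3 : G.dist u n₃ < G.dist u x
  · exact lows_helper hno hx hjd e3 e1 e2 h13.symm h23.symm h12 l3 hm1 hm2
  -- all at distance exactly `dist u x`; use the parent
  have hj1 : 1 ≤ G.dist u x := by
    rcases Nat.eq_zero_or_pos (G.dist u x) with h0 | h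
    · exfalso
      have hxu : x = u := ((hx.symm).dist_eq_zero_iff).mp (by
        rwa [SimpleGraph.dist_comm])
      have hn1 : G.dist u n₁ = 0 := by omega
      have hn1u : n₁ = u := ((reachable_adj hx e1).symm.dist_eq_zero_iff).mp (by
        rwa [SimpleGraph.dist_comm])
      subst hxu
      subst hn1u
      exact G.irrefl e1
    · exact h
  obtain ⟨p, hp, hpd, hpr⟩ := exists_parent hx hj1
  have hpn1 : p ≠ n₁ := by intro h; subst h; omega
  have hpn2 : p ≠ n₂ := by intro h; subst h; omega
  exact lows_helper hno hx hjd hp.symm e1 e2 hpn1 hpn2 h12 (by omega) hm1 hm2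

end Claims

section Claims2
variable {V : Type*} [DecidableEq V] {G : SimpleGraph V} {u : V} {d : ℕ}

lemma defect_helper (hno : ¬ ∃ D : G.Diamond, D.size ≤ 3 * d + 2)
    {x n₁ n₂ z : V} (hx : G.Reachable u x) (hjd : G.dist u x + 1 ≤ d)
    (e1 : G.Adj x n₁) (e2 : G.Adj x n₂) (h12 : n₁ ≠ n₂)
    (hm1 : G.dist u n₁ < G.dist u x) (hm2 : G.dist u n₂ ≤ G.dist u x)
    (ez : G.Adj x z) (hz : G.dist u z = G.dist u x + 1)
    (Q : G.Walk z u) (hQ : (Walk.cons ez Q).IsPath)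
    (hQL : Q.length ≤ G.dist u x + 3) : False := by
  obtain ⟨Q1, hQ1, hL1⟩ := cons_good_path hx e1 (le_of_lt hm1)
  obtain ⟨Q2, hQ2, hL2⟩ := cons_good_path hx e2 hm2
  have h1z : n₁ ≠ z := by intro h; subst h; omega
  have h2z : n₂ ≠ z := by intro h; subst h; omega
  exact no_diamond_three hno e1 e2 ez h12 h1z h2z Q1 Q2 Q hQ1 hQ2 hQ (by omega)

lemma defect_no_escape (hno : ¬ ∃ D : G.Diamond, D.size ≤ 3 * d + 2)
    {x n₁ n₂ z : V} (hx : G.Reachable u x) (hjd : G.dist u x + 1 ≤ d)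
    (e1 : G.Adj x n₁) (e2 : G.Adj x n₂) (h12 : n₁ ≠ n₂)
    (hm1 : G.dist u n₁ ≤ G.dist u x) (hm2 : G.dist u n₂ ≤ G.dist u x)
    (ez : G.Adj x z) (hz : G.dist u z = G.dist u x + 1)
    (Q : G.Walk z u) (hQ : (Walk.cons ez Q).IsPath)
    (hQL : Q.length ≤ G.dist u x + 3) : False := by
  have hj1 : 1 ≤ G.dist u x := by
    rcases Nat.eq_zero_or_pos (G.dist u x) with h0 | h
    · exfalso
      have hn1u : n₁ = u := ((reachable_adj hx e1).symm.dist_eq_zero_iff).mp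
        (by rw [SimpleGraph.dist_comm]; omega)
      have hn2u : n₂ = u := ((reachable_adj hx e2).symm.dist_eq_zero_iff).mp
        (by rw [SimpleGraph.dist_comm]; omega)
      exact h12 (hn1u.trans hn2u.symm)
    · exact h
  obtain ⟨p, hp, hpd, hpr⟩ := exists_parent hx hj1
  by_cases hp1 : p = n₁
  · subst hp1
    exact defect_helper hno hx hjd e1 e2 h12 (by omega) hm2 ez hz Q hQ hQL
  by_cases hp2 : p = n₂
  · subst hp2
    exact defect_helper hno hx hjd e2 e1 h12.symm (by omega) hm1 ez hz Q hQ hQL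
  · exact three_lows_false hno hx (by omega) hp.symm e1 e2
      hp1 hp2 h12 (by omega) hm1 hm2

lemma esc_two {x q w : V} (hx : G.Reachable u x) (e : G.Adj x q)
    (hq : G.dist u q = G.dist u x + 1) (ew : G.Adj q w) (hwx : w ≠ x)
    (hwle : G.dist u w ≤ G.dist u x + 1)
    (hnadj : G.dist u w = G.dist u x + 1 → ¬G.Adj x w) :
    ∃ Q : G.Walk q u, (Walk.cons e Q).IsPath ∧ Q.length = G.dist u w + 1 := by
  have hrq : G.Reachable u q := reachable_adj hx e
  have hrw : G.Reachable u w := reachable_adj hrq ew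
  obtain ⟨P, hPp, hPlen, hPmem⟩ := exists_good_path hrw
  have hqnP : q ∉ P.support := by
    intro hmem
    have hqw : q ≠ w := fun h => G.irrefl (h ▸ ew)
    have := (hPmem q hmem hqw).1
    omega
  have hxnP : x ∉ P.support := by
    intro hmem
    obtain ⟨hlt, hadj⟩ := hPmem x hmem hwx.symm
    have : G.dist u w = G.dist u x + 1 := by omega
    exact hnadj this ((hadj (by omega)))
  refine ⟨Walk.cons ew P, ?_, by simp [Walk.length_cons, hPlen]⟩
  rw [Walk.cons_isPath_iff, Walk.cons_isPath_iff]
  refine ⟨⟨hPp, hqnP⟩, ?_⟩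
  rw [Walk.support_cons, List.mem_cons]
  rintro (rfl | hmem)
  · exact G.irrefl e
  · exact hxnP hmem

lemma esc_three {x q t w : V} (hx : G.Reachable u x) (e : G.Adj x q)
    (hq : G.dist u q = G.dist u x + 1) (et : G.Adj q t)
    (ht : G.dist u t = G.dist u x + 2) (ew : G.Adj t w)
    (hw : G.dist u w = G.dist u x + 1) (hwq : w ≠ q) (hnadj : ¬G.Adj x w) :
    ∃ Q : G.Walk q u, (Walk.cons e Q).IsPath ∧ Q.length = G.dist u w + 2 := by
  have hrq : G.Reachable u q := reachable_adj hx e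
  have hrt : G.Reachable u t := reachable_adj hrq et
  have hrw : G.Reachable u w := reachable_adj hrt ew
  obtain ⟨P, hPp, hPlen, hPmem⟩ := exists_good_path hrw
  have htw : t ≠ w := by intro h; subst h; omega
  have htnP : t ∉ P.support := by
    intro hmem; have := (hPmem t hmem htw).1; omega
  have hqnP : q ∉ P.support := by
    intro hmem; have := (hPmem q hmem hwq.symm).1; omega
  have hxw : x ≠ w := by intro h; subst h; omega
  have hxnP : x ∉ P.support := by
    intro hmem
    obtain ⟨hlt, hadj⟩ := hPmem x hmem hxw
    exact hnadj (hadj (by omega))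
  have hxt : x ≠ t := by intro h; subst h; omega
  refine ⟨Walk.cons et (Walk.cons ew P), ?_, by simp [Walk.length_cons, hPlen]⟩
  rw [Walk.cons_isPath_iff, Walk.cons_isPath_iff, Walk.cons_isPath_iff]
  refine ⟨⟨⟨hPp, htnP⟩, ?_⟩, ?_⟩
  · rw [Walk.support_cons, List.mem_cons]
    rintro (rfl | hmem)
    · exact G.irrefl et
    · exact hqnP hmem
  · rw [Walk.support_cons, List.mem_cons, Walk.support_cons, List.mem_cons]
    rintro (rfl | rfl | hmem)
    · exact G.irrefl e
    · exact hxt rfl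
    · exact hxnP hmem

/-- W1: a defective vertex's children have no other parent. -/
lemma claim_W1 (hno : ¬ ∃ D : G.Diamond, D.size ≤ 3 * d + 2)
    {x n₁ n₂ q w : V} (hx : G.Reachable u x) (hjd : G.dist u x + 1 ≤ d)
    (e1 : G.Adj x n₁) (e2 : G.Adj x n₂) (h12 : n₁ ≠ n₂)
    (hm1 : G.dist u n₁ ≤ G.dist u x) (hm2 : G.dist u n₂ ≤ G.dist u x)
    (eq : G.Adj x q) (hq : G.dist u q = G.dist u x + 1)
    (ew : G.Adj q w) (hw : G.dist u w = G.dist u x) (hwx : w ≠ x) : False := by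
  obtain ⟨Q, hQ, hQL⟩ := esc_two hx eq hq ew hwx (by omega) (by omega)
  exact defect_no_escape hno hx hjd e1 e2 h12 hm1 hm2 eq hq Q hQ (by omega)

/-- W2: a defective vertex's children have no non-sibling flat neighbour. -/
lemma claim_W2 (hno : ¬ ∃ D : G.Diamond, D.size ≤ 3 * d + 2)
    {x n₁ n₂ q r : V} (hx : G.Reachable u x) (hjd : G.dist u x + 1 ≤ d)
    (e1 : G.Adj x n₁) (e2 : G.Adj x n₂) (h12 : n₁ ≠ n₂)
    (hm1 : G.dist u n₁ ≤ G.dist u x) (hm2 : G.dist u n₂ ≤ G.dist u x)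
    (eq : G.Adj x q) (hq : G.dist u q = G.dist u x + 1)
    (er : G.Adj q r) (hr : G.dist u r = G.dist u x + 1) (hnadj : ¬G.Adj x r) : False := by
  have hrx : r ≠ x := by intro h; subst h; omega
  obtain ⟨Q, hQ, hQL⟩ := esc_two hx eq hq er hrx (by omega) (fun _ => hnadj)
  exact defect_no_escape hno hx hjd e1 e2 h12 hm1 hm2 eq hq Q hQ (by omega)

/-- W3: grandchildren of a defective vertex via its (only) child have their other parents
among the children of the defective vertex. -/
lemma claim_W3 (hno : ¬ ∃ D : G.Diamond, D.size ≤ 3 * d + 2)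
    {x n₁ n₂ q t w : V} (hx : G.Reachable u x) (hjd : G.dist u x + 1 ≤ d)
    (e1 : G.Adj x n₁) (e2 : G.Adj x n₂) (h12 : n₁ ≠ n₂)
    (hm1 : G.dist u n₁ ≤ G.dist u x) (hm2 : G.dist u n₂ ≤ G.dist u x)
    (eq : G.Adj x q) (hq : G.dist u q = G.dist u x + 1)
    (et : G.Adj q t) (ht : G.dist u t = G.dist u x + 2)
    (ew : G.Adj t w) (hw : G.dist u w = G.dist u x + 1) (hwq : w ≠ q)
    (hnadj : ¬G.Adj x w) : False := by
  obtain ⟨Q, hQ, hQL⟩ := esc_three hx eq hq et ht ew hw hwq hnadj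
  exact defect_no_escape hno hx hjd e1 e2 h12 hm1 hm2 eq hq Q hQ (by omega)

/-- badness of a child -/
def BadChild (G : SimpleGraph V) (u : V) (x q : V) : Prop :=
  (∃ w, G.Adj q w ∧ G.dist u w = G.dist u x ∧ w ≠ x) ∨
  (∃ r, G.Adj q r ∧ G.dist u r = G.dist u x + 1 ∧ ¬G.Adj x r)

lemma esc_of_bad {x q : V} (hx : G.Reachable u x) (e : G.Adj x q)
    (hq : G.dist u q = G.dist u x + 1) (hbad : BadChild G u x q) :
    ∃ Q : G.Walk q u, (Walk.cons e Q).IsPath ∧ Q.length ≤ G.dist u x + 2 := by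
  rcases hbad with ⟨w, ew, hw, hwx⟩ | ⟨r, er, hr, hnadj⟩
  · obtain ⟨Q, hQ, hQL⟩ := esc_two hx e hq ew hwx (by omega) (by omega)
    exact ⟨Q, hQ, by omega⟩
  · have hrx : r ≠ x := by intro h; subst h; omega
    obtain ⟨Q, hQ, hQL⟩ := esc_two hx e hq er hrx (by omega) (fun _ => hnadj)
    exact ⟨Q, hQ, by omega⟩

/-- W4: a vertex cannot have two bad children. -/
lemma claim_W4 (hno : ¬ ∃ D : G.Diamond, D.size ≤ 3 * d + 2)
    {x q₁ q₂ : V} (hx : G.Reachable u x) (hj1 : 1 ≤ G.dist u x)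
    (hjd : G.dist u x + 2 ≤ d)
    (eq1 : G.Adj x q₁) (hq1 : G.dist u q₁ = G.dist u x + 1)
    (eq2 : G.Adj x q₂) (hq2 : G.dist u q₂ = G.dist u x + 1) (h12 : q₁ ≠ q₂)
    (hbad1 : BadChild G u x q₁) (hbad2 : BadChild G u x q₂) : False := by
  obtain ⟨p, hp, hpd, hpr⟩ := exists_parent hx hj1
  obtain ⟨Q1, hQ1, hL1⟩ := esc_of_bad hx eq1 hq1 hbad1
  obtain ⟨Q2, hQ2, hL2⟩ := esc_of_bad hx eq2 hq2 hbad2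
  obtain ⟨Qp, hQp, hLp⟩ := cons_good_path hx hp.symm (by omega)
  have hpq1 : p ≠ q₁ := by intro h; subst h; omega
  have hpq2 : p ≠ q₂ := by intro h; subst h; omega
  exact no_diamond_three hno hp.symm eq1 eq2 hpq1 hpq2 h12 Qp Q1 Q2 hQp hQ1 hQ2 (by omega)

end Claims2

section Count
variable {V : Type*} [Fintype V] [DecidableEq V] {G : SimpleGraph V} {u : V} {d : ℕ}

open Finset in
open Classical in
/-- neighbours at distance at most that of `x` -/
noncomputable def lowsF (G : SimpleGraph V) (u x : V) : Finset V :=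
  Finset.univ.filter (fun y => G.Adj x y ∧ G.dist u y ≤ G.dist u x)

open Classical in
/-- neighbours farther than `x` -/
noncomputable def chlF (G : SimpleGraph V) (u x : V) : Finset V :=
  Finset.univ.filter (fun y => G.Adj x y ∧ G.dist u x < G.dist u y)

lemma mem_lowsF {x y : V} : y ∈ lowsF G u x ↔ G.Adj x y ∧ G.dist u y ≤ G.dist u x := by
  simp [lowsF]

lemma mem_chlF {x y : V} : y ∈ chlF G u x ↔ G.Adj x y ∧ G.dist u x < G.dist u y := by
  simp [chlF]

lemma chlF_dist (hx : G.Reachable u x) {y : V} (hy : y ∈ chlF G u x) :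
    G.dist u y = G.dist u x + 1 := by
  rw [mem_chlF] at hy
  have := dist_nbr_le hx hy.1
  omega

lemma mem_chlF_of (hx : G.Reachable u x) {y : V} (ha : G.Adj x y)
    (hd : G.dist u y = G.dist u x + 1) : y ∈ chlF G u x := by
  rw [mem_chlF]; exact ⟨ha, by omega⟩

lemma lows_add_chl [DecidableRel G.Adj] (x : V) :
    (lowsF G u x).card + (chlF G u x).card = G.degree x := by
  classical
  have h1 : lowsF G u x = (G.neighborFinset x).filter (fun y => G.dist u y ≤ G.dist u x) := by
    ext y; simp [lowsF, SimpleGraph.mem_neighborFinset, Finset.mem_filter]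
  have h2 : chlF G u x = (G.neighborFinset x).filter (fun y => ¬ G.dist u y ≤ G.dist u x) := by
    ext y
    simp only [chlF, SimpleGraph.mem_neighborFinset, Finset.mem_filter, Finset.mem_univ,
      true_and, not_le]
  rw [h1, h2, Finset.card_filter_add_card_filter_not, ← SimpleGraph.card_neighborFinset_eq_degree]

lemma lowsF_card_le_two (hno : ¬ ∃ D : G.Diamond, D.size ≤ 3 * d + 2)
    {x : V} (hx : G.Reachable u x) (hxd : G.dist u x ≤ d) :
    (lowsF G u x).card ≤ 2 := by
  by_contra hc
  push_neg at hc
  obtain ⟨a, b, c, ha, hb, hc', hab, hac, hbc⟩ := Finset.two_lt_card_iff.mp hc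
  rw [mem_lowsF] at ha hb hc'
  exact three_lows_false hno hx hxd ha.1 hb.1 hc'.1 hab hac hbc ha.2 hb.2 hc'.2

lemma chlF_card_ge [DecidableRel G.Adj] (hno : ¬ ∃ D : G.Diamond, D.size ≤ 3 * d + 2)
    (hdeg : ∀ v : V, 3 ≤ G.degree v)
    {x : V} (hx : G.Reachable u x) (hxd : G.dist u x ≤ d) :
    G.degree x - 2 ≤ (chlF G u x).card := by
  have := lows_add_chl (G := G) (u := u) x
  have := lowsF_card_le_two hno hx hxd
  omega

lemma chlF_nonempty [DecidableRel G.Adj] (hno : ¬ ∃ D : G.Diamond, D.size ≤ 3 * d + 2)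
    (hdeg : ∀ v : V, 3 ≤ G.degree v)
    {x : V} (hx : G.Reachable u x) (hxd : G.dist u x ≤ d) :
    ∃ q, q ∈ chlF G u x := by
  have h1 := chlF_card_ge hno hdeg hx hxd
  have h2 := hdeg x
  have : 0 < (chlF G u x).card := by omega
  exact Finset.card_pos.mp this

end Count

section Count2
variable {V : Type*} [Fintype V] [DecidableEq V] {G : SimpleGraph V} {u : V} {d : ℕ}

open Classical in
/-- triples (v, w, q) along two BFS levels below level `d` -/
noncomputable def TT (G : SimpleGraph V) (u : V) (d : ℕ) : Finset (V × V × V) :=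
  Finset.univ.filter (fun s => (G.Reachable u s.1 ∧ G.dist u s.1 = d - 2) ∧
    G.Adj s.1 s.2.1 ∧ G.dist u s.2.1 = d - 1 ∧ G.Adj s.2.1 s.2.2 ∧ G.dist u s.2.2 = d)

open Classical in
noncomputable def AF (G : SimpleGraph V) (u : V) (k : ℕ) : Finset V :=
  Finset.univ.filter (fun v => G.Reachable u v ∧ G.dist u v = k)

noncomputable def multT (G : SimpleGraph V) (u : V) (d : ℕ) (q : V) : ℕ :=
  ((TT G u d).filter (fun s => s.2.2 = q)).card

lemma mem_TT {s : V × V × V} : s ∈ TT G u d ↔ (G.Reachable u s.1 ∧ G.dist u s.1 = d - 2) ∧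
    G.Adj s.1 s.2.1 ∧ G.dist u s.2.1 = d - 1 ∧ G.Adj s.2.1 s.2.2 ∧ G.dist u s.2.2 = d := by
  simp [TT]

lemma mem_AF {k : ℕ} {v : V} : v ∈ AF G u k ↔ G.Reachable u v ∧ G.dist u v = k := by
  simp [AF]

lemma count_skeleton (hd : 2 ≤ d)
    (hM : ∀ q ∈ AF G u d, multT G u d q ≤ 2)
    (hV : ∀ v ∈ AF G u (d - 2),
      3 ≤ ((TT G u d).filter (fun s => s.1 = v)).card +
          ((TT G u d).filter (fun s => s.1 = v ∧
            s.2.2 ∈ (AF G u d).filter (fun q => multT G u d q = 1))).card) :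
    3 * (AF G u (d - 2)).card ≤ 2 * (AF G u d).card := by
  classical
  set T := TT G u d with hT
  set A := AF G u (d - 2) with hA
  set C := AF G u d with hC
  set P := C.filter (fun q => multT G u d q = 1) with hP
  have hsT : ∀ s ∈ T, s.1 ∈ A := by
    intro s hs
    rw [hT, mem_TT] at hs
    rw [hA, mem_AF]
    exact ⟨hs.1.1, hs.1.2⟩
  have hsC : ∀ s ∈ T, s.2.2 ∈ C := by
    intro s hs
    rw [hT, mem_TT] at hs
    rw [hC, mem_AF]
    obtain ⟨⟨hr, _⟩, ha1, _, ha2, hd2⟩ := hs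
    exact ⟨reachable_adj (reachable_adj hr ha1) ha2, hd2⟩
  set Tp := T.filter (fun s => s.2.2 ∈ P) with hTp
  have h1 : T.card = ∑ v ∈ A, (T.filter (fun s => s.1 = v)).card :=
    Finset.card_eq_sum_card_fiberwise hsT
  have h2 : Tp.card = ∑ v ∈ A, (Tp.filter (fun s => s.1 = v)).card :=
    Finset.card_eq_sum_card_fiberwise (fun s hs => hsT s (Finset.mem_of_mem_filter s hs))
  have h3 : T.card = ∑ q ∈ C, (T.filter (fun s => s.2.2 = q)).card :=
    Finset.card_eq_sum_card_fiberwise hsC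
  have h4 : Tp.card = ∑ q ∈ C, (Tp.filter (fun s => s.2.2 = q)).card :=
    Finset.card_eq_sum_card_fiberwise (fun s hs => hsC s (Finset.mem_of_mem_filter s hs))
  have hstep1 : 3 * A.card ≤ T.card + Tp.card := by
    rw [h1, h2, ← Finset.sum_add_distrib]
    rw [show 3 * A.card = ∑ _v ∈ A, 3 by rw [Finset.sum_const]; ring]
    refine Finset.sum_le_sum ?_
    intro v hv
    have := hV v hv
    have he : Tp.filter (fun s => s.1 = v) = T.filter (fun s => s.1 = v ∧ s.2.2 ∈ P) := by
      rw [hTp, Finset.filter_filter]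
      congr 1
      ext s
      tauto
    rw [he]
    exact this
  have hstep2 : T.card + Tp.card ≤ 2 * C.card := by
    rw [h3, h4, ← Finset.sum_add_distrib]
    rw [show 2 * C.card = ∑ _q ∈ C, 2 by rw [Finset.sum_const]; ring]
    refine Finset.sum_le_sum ?_
    intro q hq
    by_cases hqP : q ∈ P
    · have hmq : multT G u d q = 1 := (Finset.mem_filter.mp hqP).2
      have he : Tp.filter (fun s => s.2.2 = q) = T.filter (fun s => s.2.2 = q) := by
        rw [hTp, Finset.filter_filter]
        apply Finset.filter_congr
        intro s _
        constructor
        · tauto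
        · rintro rfl
          exact ⟨hqP, rfl⟩
      rw [he]
      have : (T.filter (fun s => s.2.2 = q)).card = multT G u d q := rfl
      omega
    · have he : Tp.filter (fun s => s.2.2 = q) = ∅ := by
        rw [hTp, Finset.filter_filter]
        rw [Finset.filter_eq_empty_iff]
        rintro s _ ⟨h1', rfl⟩
        exact hqP h1'
      rw [he]
      have h5 : (T.filter (fun s => s.2.2 = q)).card = multT G u d q := rfl
      have := hM q hq
      simp only [Finset.card_empty]
      omega
  omega

end Count2

section Count3
variable {V : Type*} [Fintype V] [DecidableEq V] {G : SimpleGraph V} {u : V} {d : ℕ}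

lemma claimM (hno : ¬ ∃ D : G.Diamond, D.size ≤ 3 * d + 2) (hd : 2 ≤ d) :
    ∀ q ∈ AF G u d, multT G u d q ≤ 2 := by
  intro q hq
  rw [mem_AF] at hq
  obtain ⟨hrq, hdq⟩ := hq
  by_contra hc
  push_neg at hc
  obtain ⟨s₁, s₂, s₃, hs₁, hs₂, hs₃, h12, h13, h23⟩ :=
    Finset.two_lt_card_iff.mp hc
  rw [Finset.mem_filter, mem_TT] at hs₁ hs₂ hs₃
  obtain ⟨v₁, w₁, t₁⟩ := s₁
  obtain ⟨v₂, w₂, t₂⟩ := s₂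
  obtain ⟨v₃, w₃, t₃⟩ := s₃
  obtain ⟨⟨⟨hr1, hv1⟩, ha1, hw1, hb1, -⟩, hq1⟩ := hs₁
  obtain ⟨⟨⟨hr2, hv2⟩, ha2, hw2, hb2, -⟩, hq2⟩ := hs₂
  obtain ⟨⟨⟨hr3, hv3⟩, ha3, hw3, hb3, -⟩, hq3⟩ := hs₃
  simp only at hr1 hv1 ha1 hw1 hb1 hq1 hr2 hv2 ha2 hw2 hb2 hq2 hr3 hv3 ha3 hw3 hb3 hq3
  rw [hq1] at hb1
  rw [hq2] at hb2
  rw [hq3] at hb3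
  have ht12 : t₁ = t₂ := hq1.trans hq2.symm
  have ht13 : t₁ = t₃ := hq1.trans hq3.symm
  have ht23 : t₂ = t₃ := hq2.trans hq3.symm
  have key : ∀ {va vb wa wc : V}, G.Reachable u va → G.Adj va wa → G.Adj vb wa →
      G.dist u va = d - 2 → G.dist u vb = d - 2 → G.dist u wa = d - 1 →
      va ≠ vb → G.Adj wa q → G.Adj q wc → G.dist u wc = d - 1 → wc ≠ wa → False := by
    intro va vb wa wc hrva hava havb hdva hdvb hdwa hvab hwaq hqwc hdwc hwcne
    exact claim_W1 hno (reachable_adj hrva hava) (by omega) hava.symm havb.symm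
      hvab (by omega) (by omega) hwaq (by omega) hqwc (by omega) hwcne
  by_cases g12 : w₁ = w₂
  · subst g12
    by_cases g13 : w₁ = w₃
    · subst g13
      -- all three parents equal; the v's are three lows of w₁
      have hv12 : v₁ ≠ v₂ := fun h => h12 (by simp [Prod.ext_iff, h, ht12])
      have hv13 : v₁ ≠ v₃ := fun h => h13 (by simp [Prod.ext_iff, h, ht13])
      have hv23 : v₂ ≠ v₃ := fun h => h23 (by simp [Prod.ext_iff, h, ht23])
      exact three_lows_false hno (reachable_adj hr1 ha1) (by omega)
        ha1.symm ha2.symm ha3.symm hv12 hv13 hv23 (by omega) (by omega) (by omega)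
    · have hv12 : v₁ ≠ v₂ := fun h => h12 (by simp [Prod.ext_iff, h, ht12])
      exact key hr1 ha1 ha2 hv1 hv2 hw1 hv12 hb1 hb3.symm hw3 (Ne.symm g13)
  · by_cases g13 : w₁ = w₃
    · subst g13
      have hv13 : v₁ ≠ v₃ := fun h => h13 (by simp [Prod.ext_iff, h, ht13])
      exact key hr1 ha1 ha3 hv1 hv3 hw1 hv13 hb1 hb2.symm hw2 (Ne.symm g12)
    · by_cases g23 : w₂ = w₃
      · subst g23
        have hv23 : v₂ ≠ v₃ := fun h => h23 (by simp [Prod.ext_iff, h, ht23])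
        exact key hr2 ha2 ha3 hv2 hv3 hw2 hv23 hb2 hb1.symm hw1 g12
      · -- three distinct parents of q
        exact three_lows_false hno hrq (by omega)
          hb1.symm hb2.symm hb3.symm g12 g13 g23 (by omega) (by omega) (by omega)

end Count3

section Count4
variable {V : Type*} [Fintype V] [DecidableEq V] {G : SimpleGraph V} {u : V} {d : ℕ}

lemma card3 {α : Type*} {s : Finset α} {a b c : α} (ha : a ∈ s) (hb : b ∈ s) (hc : c ∈ s)
    (hab : a ≠ b) (hac : a ≠ c) (hbc : b ≠ c) : 3 ≤ s.card :=
  Finset.two_lt_card_iff.mpr ⟨a, b, c, ha, hb, hc, hab, hac, hbc⟩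

lemma card2 {α : Type*} {s : Finset α} {a b : α} (ha : a ∈ s) (hb : b ∈ s)
    (hab : a ≠ b) : 2 ≤ s.card :=
  Finset.one_lt_card.mpr ⟨a, ha, b, hb, hab⟩

lemma mem_triple (hd : 2 ≤ d) {v w q : V} (hrv : G.Reachable u v) (hdv : G.dist u v = d - 2)
    (hw : w ∈ chlF G u v) (hq : q ∈ chlF G u w) : (v, w, q) ∈ TT G u d := by
  have hdw := chlF_dist hrv hw
  have hrw : G.Reachable u w := reachable_adj hrv (mem_chlF.mp hw).1
  have hdq := chlF_dist hrw hq
  rw [mem_TT]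
  dsimp only
  exact ⟨⟨hrv, hdv⟩, (mem_chlF.mp hw).1, by omega, (mem_chlF.mp hq).1, by omega⟩

/-- privacy helper : the multiplicity of `q` is `1` when its parent and grandparent
are forced. -/
lemma mult_one (hd : 2 ≤ d) {v₀ w₀ q : V}
    (hmem : (v₀, w₀, q) ∈ TT G u d)
    (hw_uniq : ∀ w', G.Adj q w' → G.dist u w' = d - 1 → w' = w₀)
    (hv_uniq : ∀ v', G.Reachable u v' → G.Adj v' w₀ → G.dist u v' = d - 2 → v' = v₀) :
    multT G u d q = 1 := by
  classical
  have : (TT G u d).filter (fun s => s.2.2 = q) = {(v₀, w₀, q)} := by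
    apply Finset.eq_singleton_iff_unique_mem.mpr
    constructor
    · exact Finset.mem_filter.mpr ⟨hmem, rfl⟩
    · rintro ⟨v', w', t'⟩ hs
      rw [Finset.mem_filter, mem_TT] at hs
      obtain ⟨⟨⟨hr', hv'⟩, ha', hw', hb', -⟩, hq'⟩ := hs
      simp only at hr' hv' ha' hw' hb' hq'
      subst hq'
      have hww : w' = w₀ := hw_uniq w' hb'.symm hw'
      subst hww
      have hvv : v' = v₀ := hv_uniq v' hr' ha' hv'
      subst hvv
      rfl
  rw [multT, this, Finset.card_singleton]

lemma claimV [DecidableRel G.Adj] (hno : ¬ ∃ D : G.Diamond, D.size ≤ 3 * d + 2)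
    (hd : 2 ≤ d) (hdeg : ∀ v : V, 3 ≤ G.degree v) :
    ∀ v ∈ AF G u (d - 2),
      3 ≤ ((TT G u d).filter (fun s => s.1 = v)).card +
          ((TT G u d).filter (fun s => s.1 = v ∧
            s.2.2 ∈ (AF G u d).filter (fun q => multT G u d q = 1))).card := by
  classical
  intro v hv
  rw [mem_AF] at hv
  obtain ⟨hrv, hdv⟩ := hv
  have hdvd : G.dist u v ≤ d := by omega
  -- membership of constructed triples in the first filter
  have memg : ∀ {w q : V}, w ∈ chlF G u v → q ∈ chlF G u w →
      (v, w, q) ∈ (TT G u d).filter (fun s => s.1 = v) := by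
    intro w q hw hq
    exact Finset.mem_filter.mpr ⟨mem_triple hd hrv hdv hw hq, rfl⟩
  have hchl1 : 1 ≤ (chlF G u v).card := by
    have := chlF_card_ge hno hdeg hrv hdvd
    have := hdeg v
    omega
  -- child data
  have wfacts : ∀ {w : V}, w ∈ chlF G u v →
      G.Adj v w ∧ G.Reachable u w ∧ G.dist u w = d - 1 ∧ G.dist u w ≤ d := by
    intro w hw
    have h1 := (mem_chlF.mp hw).1
    have h2 : G.Reachable u w := reachable_adj hrv h1
    have h3 := chlF_dist hrv hw
    exact ⟨h1, h2, by omega, by omega⟩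
  by_cases h3c : 3 ≤ (chlF G u v).card
  · -- C0 : three children
    obtain ⟨w₁, w₂, w₃, hw₁, hw₂, hw₃, g12, g13, g23⟩ :=
      Finset.two_lt_card_iff.mp (by omega : 2 < (chlF G u v).card)
    obtain ⟨q₁, hq₁⟩ := chlF_nonempty hno hdeg (wfacts hw₁).2.1 (wfacts hw₁).2.2.2
    obtain ⟨q₂, hq₂⟩ := chlF_nonempty hno hdeg (wfacts hw₂).2.1 (wfacts hw₂).2.2.2
    obtain ⟨q₃, hq₃⟩ := chlF_nonempty hno hdeg (wfacts hw₃).2.1 (wfacts hw₃).2.2.2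
    have := card3 (memg hw₁ hq₁) (memg hw₂ hq₂) (memg hw₃ hq₃)
      (fun h => g12 (congrArg (fun s => s.2.1) h))
      (fun h => g13 (congrArg (fun s => s.2.1) h))
      (fun h => g23 (congrArg (fun s => s.2.1) h))
    omega
  -- now at most two children; `v` is not `u`
  have hj1 : 1 ≤ G.dist u v := by
    by_contra hj0
    push_neg at hj0
    have hlows0 : lowsF G u v = ∅ := by
      rw [Finset.eq_empty_iff_forall_notMem]
      intro y hy
      rw [mem_lowsF] at hy
      have hdy : G.dist u y = 0 := by omega
      have hyu : y = u := ((reachable_adj hrv hy.1).symm.dist_eq_zero_iff).mp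
        (by rw [SimpleGraph.dist_comm]; omega)
      have hvu : v = u := (hrv.symm.dist_eq_zero_iff).mp
        (by rw [SimpleGraph.dist_comm]; omega)
      subst hyu; subst hvu
      exact G.irrefl hy.1
    have hsum := lows_add_chl (G := G) (u := u) v
    have hdg := hdeg v
    rw [hlows0] at hsum
    simp at hsum
    omega
  by_cases h2c : (chlF G u v).card = 2
  · -- C1 : exactly two children
    obtain ⟨w₁, w₂, hw12, hchlv⟩ := Finset.card_eq_two.mp h2c
    have hw₁ : w₁ ∈ chlF G u v := by rw [hchlv]; simp
    have hw₂ : w₂ ∈ chlF G u v := by rw [hchlv]; simp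
    obtain ⟨ha1, hr1, hd1, hdd1⟩ := wfacts hw₁
    obtain ⟨ha2, hr2, hd2, hdd2⟩ := wfacts hw₂
    by_cases hcw1 : 2 ≤ (chlF G u w₁).card
    · obtain ⟨q₁, hq₁, q₁', hq₁', hqne⟩ :=
        Finset.one_lt_card.mp (show 1 < (chlF G u w₁).card by omega)
      obtain ⟨q₂, hq₂⟩ := chlF_nonempty hno hdeg hr2 hdd2
      have := card3 (memg hw₁ hq₁) (memg hw₁ hq₁') (memg hw₂ hq₂)
        (fun h => hqne (congrArg (fun s => s.2.2) h))
        (fun h => hw12 (congrArg (fun s => s.2.1) h))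
        (fun h => hw12 (congrArg (fun s => s.2.1) h))
      omega
    by_cases hcw2 : 2 ≤ (chlF G u w₂).card
    · obtain ⟨q₂, hq₂, q₂', hq₂', hqne⟩ :=
        Finset.one_lt_card.mp (show 1 < (chlF G u w₂).card by omega)
      obtain ⟨q₁, hq₁⟩ := chlF_nonempty hno hdeg hr1 hdd1
      have := card3 (memg hw₂ hq₂) (memg hw₂ hq₂') (memg hw₁ hq₁)
        (fun h => hqne (congrArg (fun s => s.2.2) h))
        (fun h => hw12.symm (congrArg (fun s => s.2.1) h))
        (fun h => hw12.symm (congrArg (fun s => s.2.1) h))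
      omega
    -- both children have a single child ; use W4 to find a non-bad child
    have hnotboth : ¬ (BadChild G u v w₁ ∧ BadChild G u v w₂) := by
      rintro ⟨hb1, hb2⟩
      exact claim_W4 hno hrv hj1 (by omega) ha1 (by omega) ha2 (by omega) hw12 hb1 hb2
    -- symmetric core : given the non-bad child is `wb`, the other `wa`
    have core : ∀ wa wb : V, wa ∈ chlF G u v → wb ∈ chlF G u v → wa ≠ wb →
        chlF G u v = {wa, wb} →
        (chlF G u wa).card ≤ 1 → (chlF G u wb).card ≤ 1 → ¬ BadChild G u v wb →
        3 ≤ ((TT G u d).filter (fun s => s.1 = v)).card +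
          ((TT G u d).filter (fun s => s.1 = v ∧
            s.2.2 ∈ (AF G u d).filter (fun q => multT G u d q = 1))).card := by
      intro wa wb hwa hwb hab hset hcwa hcwb hnb
      obtain ⟨haa, hra, hda, hdda⟩ := wfacts hwa
      obtain ⟨hab', hrb, hdb, hddb⟩ := wfacts hwb
      have hvwb : v ≠ wb := G.ne_of_adj hab'
      have hvwa : v ≠ wa := G.ne_of_adj haa
      have hvlb : v ∈ lowsF G u wb := mem_lowsF.mpr ⟨hab'.symm, by omega⟩
      have hlb2 : (lowsF G u wb).card = 2 := by
        have hle := lowsF_card_le_two hno hrb hddb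
        have hsum := lows_add_chl (G := G) (u := u) wb
        have := hdeg wb
        omega
      obtain ⟨ℓ, hℓ, hℓv⟩ := Finset.exists_mem_ne
        (show 1 < (lowsF G u wb).card by omega) v
      rw [mem_lowsF] at hℓ
      have hdℓlb : d - 2 ≤ G.dist u ℓ := by
        have := dist_nbr_ge hrb hℓ.1
        omega
      have hℓwa : ℓ = wa := by
        rcases Nat.lt_or_ge (G.dist u ℓ) (d - 1) with hlow | hhigh
        · exfalso
          exact hnb (Or.inl ⟨ℓ, hℓ.1, by omega, hℓv⟩)
        · have hdeq : G.dist u ℓ = d - 1 := by omega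
          by_cases hadjvl : G.Adj v ℓ
          · have : ℓ ∈ chlF G u v := mem_chlF.mpr ⟨hadjvl, by omega⟩
            rw [hset] at this
            simp at this
            rcases this with h | h
            · exact h
            · exact absurd (h ▸ hℓ.1) (G.irrefl)
          · exact absurd (Or.inr ⟨ℓ, hℓ.1, by omega, hadjvl⟩) hnb
      rw [hℓwa] at hℓ
      have hadjba : G.Adj wb wa := hℓ.1
      -- lows of wa
      have hla2 : (lowsF G u wa).card = 2 := by
        have hle := lowsF_card_le_two hno hra hdda
        have hsum := lows_add_chl (G := G) (u := u) wa
        have := hdeg wa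
        omega
      have hsub : {v, wb} ⊆ lowsF G u wa := by
        intro t ht
        simp only [Finset.mem_insert, Finset.mem_singleton] at ht
        rcases ht with rfl | rfl
        · exact mem_lowsF.mpr ⟨haa.symm, by omega⟩
        · exact mem_lowsF.mpr ⟨hadjba.symm, by omega⟩
      have hlowsa : lowsF G u wa = {v, wb} := by
        refine (Finset.eq_of_subset_of_card_le hsub ?_).symm
        rw [Finset.card_insert_of_notMem (by simpa using hvwb), Finset.card_singleton]
        omega
      obtain ⟨qa, hqa⟩ := chlF_nonempty hno hdeg hra hdda
      obtain ⟨qb, hqb⟩ := chlF_nonempty hno hdeg hrb hddb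
      have hdqa : G.dist u qa = d := by
        have := chlF_dist hra hqa
        omega
      -- privacy of qa
      have hpriv : multT G u d qa = 1 := by
        refine mult_one hd (mem_triple hd hrv hdv hwa hqa) ?_ ?_
        · intro w' hadj hdw'
          by_contra hne
          exact claim_W1 hno hra (by omega) haa.symm hadjba.symm hvwb
            (by omega) (by omega) (mem_chlF.mp hqa).1 (by
              have := chlF_dist hra hqa
              omega) hadj (by omega) hne
        · intro v' hrv' hadj hdv'
          have : v' ∈ lowsF G u wa := mem_lowsF.mpr ⟨hadj.symm, by omega⟩
          rw [hlowsa] at this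
          simp only [Finset.mem_insert, Finset.mem_singleton] at this
          rcases this with rfl | rfl
          · rfl
          · omega
      have hqaAF : qa ∈ AF G u d := mem_AF.mpr ⟨reachable_adj hra (mem_chlF.mp hqa).1, hdqa⟩
      -- conclude
      have hg : 2 ≤ ((TT G u d).filter (fun s => s.1 = v)).card := by
        exact card2 (memg hwa hqa) (memg hwb hqb)
          (fun h => hab (congrArg (fun s => s.2.1) h))
      have hp : 1 ≤ ((TT G u d).filter (fun s => s.1 = v ∧
          s.2.2 ∈ (AF G u d).filter (fun q => multT G u d q = 1))).card := by
        rw [Nat.one_le_iff_ne_zero, ← Nat.pos_iff_ne_zero, Finset.card_pos]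
        refine ⟨(v, wa, qa), Finset.mem_filter.mpr ⟨mem_triple hd hrv hdv hwa hqa, rfl, ?_⟩⟩
        exact Finset.mem_filter.mpr ⟨hqaAF, hpriv⟩
      omega
    have honeone1 : (chlF G u w₁).card ≤ 1 := by
      have := Nat.lt_of_not_le hcw1
      omega
    have honeone2 : (chlF G u w₂).card ≤ 1 := by
      have := Nat.lt_of_not_le hcw2
      omega
    rcases not_and_or.mp hnotboth with hnb1 | hnb2
    · exact core w₂ w₁ hw₂ hw₁ hw12.symm (by rw [hchlv]; exact Finset.pair_comm w₁ w₂)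
        honeone2 honeone1 hnb1
    · exact core w₁ w₂ hw₁ hw₂ hw12 hchlv honeone1 honeone2 hnb2
  · -- C2 : exactly one child
    have h1c : (chlF G u v).card = 1 := by omega
    obtain ⟨w, hsetw⟩ := Finset.card_eq_one.mp h1c
    have hw : w ∈ chlF G u v := by rw [hsetw]; simp
    obtain ⟨haw, hrw, hdw, hddw⟩ := wfacts hw
    -- v is defective : two lows
    have hlv2 : (lowsF G u v).card = 2 := by
      have hle := lowsF_card_le_two hno hrv hdvd
      have hsum := lows_add_chl (G := G) (u := u) v
      have := hdeg v
      omega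
    obtain ⟨n₁, n₂, hn12, hsetn⟩ := Finset.card_eq_two.mp hlv2
    have hn₁ : n₁ ∈ lowsF G u v := by rw [hsetn]; simp
    have hn₂ : n₂ ∈ lowsF G u v := by rw [hsetn]; simp
    rw [mem_lowsF] at hn₁ hn₂
    have hdwv : G.dist u w = G.dist u v + 1 := chlF_dist hrv hw
    -- lows of w is exactly {v}
    have hlowsw : lowsF G u w = {v} := by
      rw [Finset.eq_singleton_iff_unique_mem]
      refine ⟨mem_lowsF.mpr ⟨haw.symm, by omega⟩, ?_⟩
      intro ℓ hℓ
      rw [mem_lowsF] at hℓ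
      by_contra hℓv
      have hdℓlb : G.dist u v ≤ G.dist u ℓ := by
        have := dist_nbr_ge hrw hℓ.1
        omega
      rcases Nat.lt_or_ge (G.dist u ℓ) (G.dist u w) with hlow | hhigh
      · exact claim_W1 hno hrv (by omega) hn₁.1 hn₂.1 hn12 hn₁.2 hn₂.2
          haw hdwv hℓ.1 (by omega) hℓv
      · have hdeq : G.dist u ℓ = G.dist u v + 1 := by omega
        have hnadj : ¬ G.Adj v ℓ := by
          intro hadj
          have : ℓ ∈ chlF G u v := mem_chlF.mpr ⟨hadj, by omega⟩
          rw [hsetw] at this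
          simp at this
          exact absurd (this ▸ hℓ.1) (G.irrefl)
        exact claim_W2 hno hrv (by omega) hn₁.1 hn₂.1 hn12 hn₁.2 hn₂.2
          haw hdwv hℓ.1 hdeq hnadj
    have hlw1 : (lowsF G u w).card = 1 := by rw [hlowsw]; simp
    have hcw2 : 2 ≤ (chlF G u w).card := by
      have hsum := lows_add_chl (G := G) (u := u) w
      have := hdeg w
      omega
    obtain ⟨q₁, hq₁, q₂, hq₂, hqne⟩ :=
      Finset.one_lt_card.mp (show 1 < (chlF G u w).card by omega)
    have hdq₁ : G.dist u q₁ = d := by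
      have := chlF_dist hrw hq₁
      omega
    -- privacy of q₁
    have hpriv : multT G u d q₁ = 1 := by
      refine mult_one hd (mem_triple hd hrv hdv hw hq₁) ?_ ?_
      · intro w' hadj hdw'
        by_contra hne
        have hnadj : ¬ G.Adj v w' := by
          intro hadjv
          have : w' ∈ chlF G u v := mem_chlF.mpr ⟨hadjv, by omega⟩
          rw [hsetw] at this
          simp at this
          exact hne this
        exact claim_W3 hno hrv (by omega) hn₁.1 hn₂.1 hn12 hn₁.2 hn₂.2
          haw hdwv (mem_chlF.mp hq₁).1 (by
            have := chlF_dist hrw hq₁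
            omega) hadj (by omega) hne hnadj
      · intro v' hrv' hadj hdv'
        have : v' ∈ lowsF G u w := mem_lowsF.mpr ⟨hadj.symm, by omega⟩
        rw [hlowsw] at this
        simpa using this
    have hq₁AF : q₁ ∈ AF G u d := mem_AF.mpr ⟨reachable_adj hrw (mem_chlF.mp hq₁).1, hdq₁⟩
    have hg : 2 ≤ ((TT G u d).filter (fun s => s.1 = v)).card := by
      exact card2 (memg hw hq₁) (memg hw hq₂)
        (fun h => hqne (congrArg (fun s => s.2.2) h))
    have hp : 1 ≤ ((TT G u d).filter (fun s => s.1 = v ∧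
        s.2.2 ∈ (AF G u d).filter (fun q => multT G u d q = 1))).card := by
      rw [Nat.one_le_iff_ne_zero, ← Nat.pos_iff_ne_zero, Finset.card_pos]
      refine ⟨(v, w, q₁), Finset.mem_filter.mpr ⟨mem_triple hd hrv hdv hw hq₁, rfl, ?_⟩⟩
      exact Finset.mem_filter.mpr ⟨hq₁AF, hpriv⟩
    omega

end Count4


/-- Claim 2: if `G` has minimum degree at least 3 and no diamond with at most `3d + 2` edges
(`d ≥ 2`), then the BFS layers from any vertex `u` satisfy `|N_d| ≥ (3/2)·|N_{d-2}|`. -/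
theorem sphere_growth_of_no_small_diamond (V : Type*) [Fintype V] [DecidableEq V]
    (G : SimpleGraph V) [DecidableRel G.Adj] (u : V) (d : ℕ) (hd : 2 ≤ d)
    (hdeg : ∀ v : V, 3 ≤ G.degree v)
    (hno : ¬ ∃ D : G.Diamond, D.size ≤ 3 * d + 2) :
    (3 / 2 : ℝ) * (G.sphere u (d - 2)).ncard ≤ (G.sphere u d).ncard := by
  classical
  have hkey : 3 * (AF G u (d - 2)).card ≤ 2 * (AF G u d).card :=
    count_skeleton hd (claimM hno hd) (claimV hno hd hdeg)
  have hs : ∀ k : ℕ, (G.sphere u k).ncard = (AF G u k).card := by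
    intro k
    have : G.sphere u k = ↑(AF G u k) := by
      ext w
      simp [SimpleGraph.sphere, AF]
    rw [this, Set.ncard_coe_finset]
  rw [hs, hs]
  have h3 : ((3 : ℕ) * (AF G u (d - 2)).card : ℝ) ≤ ((2 : ℕ) * (AF G u d).card : ℝ) := by
    exact_mod_cast hkey
  push_cast at h3 ⊢
  linarith
end

section
/- Let G be a finite 2-connected simple graph, i.e., G has at least 3 vertices, is connected, and has no cutvertex. Suppose a set M_V of vertices of G and a set M_E of edges of G are chosen ("marked") such that no vertex in M_V is an endpoint of an edge in M_E. Then |M_V| + |M_E| is at most the total number of edges of G. -/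
open SimpleGraph

variable {V : Type*}

/-- In a finite 2-connected simple graph, if marked vertices and marked edges are such that
no marked vertex is an endpoint of a marked edge, then the total number of marked vertices
and marked edges is at most the number of edges of the graph. -/
theorem marked_vertices_edges_le_edges (V : Type*) [Fintype V] [DecidableEq V]
    (G : SimpleGraph V) [DecidableRel G.Adj]
    (hcard : 3 ≤ Fintype.card V) (hconn : G.Connected)
    (hcut : ∀ v : V, (G.induce {w | w ≠ v}).Connected)
    (MV : Finset V) (ME : Finset (Sym2 V)) (hME : ∀ e ∈ ME, e ∈ G.edgeSet)
    (hdisj : ∀ v ∈ MV, ∀ e ∈ ME, v ∉ e) :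
    MV.card + ME.card ≤ G.edgeFinset.card := by

  classical
  -- Minimum degree is at least 2.
  have hmin : ∀ v : V, 2 ≤ G.degree v := by
    intro v
    by_contra h
    push_neg at h
    interval_cases hdeg : G.degree v
    · -- degree 0
      obtain ⟨w, hw⟩ : ∃ w : V, w ≠ v := by
        have : 1 < Fintype.card V := by omega
        exact Fintype.exists_ne_of_one_lt_card this v
      obtain ⟨p⟩ := hconn.preconnected v w
      cases p with
      | nil => exact hw rfl
      | cons hadj p' =>
        have : _ ∈ G.neighborFinset v := (G.mem_neighborFinset _ _).2 hadj
        rw [← G.card_neighborFinset_eq_degree] at hdeg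
        rw [Finset.card_eq_zero.mp hdeg] at this
        simp at this
    · -- degree 1
      rw [← G.card_neighborFinset_eq_degree] at hdeg
      obtain ⟨w, hw⟩ := Finset.card_eq_one.mp hdeg
      have hvw : v ≠ w := by
        have : w ∈ G.neighborFinset v := by rw [hw]; simp
        exact fun h => (G.mem_neighborFinset _ _).1 this |>.ne (h ▸ rfl)
      obtain ⟨u, hu⟩ : ∃ u : V, u ∉ ({v, w} : Finset V) := by
        by_contra hc
        push_neg at hc
        have : (Finset.univ : Finset V) ⊆ {v, w} := fun x _ => hc x
        have := Finset.card_le_card this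
        have h2 : ({v, w} : Finset V).card ≤ 2 :=
          (Finset.card_insert_le _ _).trans (by simp)
        simp only [Finset.card_univ] at this
        omega
      simp only [Finset.mem_insert, Finset.mem_singleton, not_or] at hu
      have hv' : v ∈ {x : V | x ≠ w} := hvw
      have hu' : u ∈ {x : V | x ≠ w} := hu.2
      obtain ⟨p⟩ := (hcut w).preconnected ⟨v, hv'⟩ ⟨u, hu'⟩
      have hnil : ¬ p.Nil := SimpleGraph.Walk.not_nil_of_ne (by
        intro h
        exact hu.1 (congrArg Subtype.val h).symm)
      have hadj := SimpleGraph.Walk.adj_snd hnil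
      set c := p.getVert 1 with hcdef
      have hGadj : G.Adj v (c : V) := hadj
      have hc : (c : V) ∈ G.neighborFinset v := (G.mem_neighborFinset _ _).2 hGadj
      rw [hw, Finset.mem_singleton] at hc
      exact c.2 hc
  -- Edges incident to a marked vertex.
  set EM : Finset (Sym2 V) := G.edgeFinset.filter (fun e => ∃ v ∈ MV, v ∈ e) with hEMdef
  have hEMsub : EM ⊆ G.edgeFinset := Finset.filter_subset _ _
  have hME' : ME ⊆ G.edgeFinset \ EM := by
    intro e he
    rw [Finset.mem_sdiff]
    refine ⟨(G.mem_edgeFinset).2 (hME e he), ?_⟩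
    simp only [hEMdef, Finset.mem_filter, not_and, not_exists]
    intro _ v hv
    exact fun hve => (hdisj v hv e he) hve
  have h1 : ME.card ≤ G.edgeFinset.card - EM.card := by
    have := Finset.card_le_card hME'
    rwa [Finset.card_sdiff_of_subset hEMsub] at this
  have h2 : MV.card ≤ EM.card := by
    have key : 2 * MV.card ≤ 2 * EM.card := by
      calc 2 * MV.card = ∑ _v ∈ MV, 2 := by simp [mul_comm]
        _ ≤ ∑ v ∈ MV, G.degree v := Finset.sum_le_sum fun v _ => hmin v
        _ = ∑ v ∈ MV, (EM.filter (fun e => v ∈ e)).card := by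
            refine Finset.sum_congr rfl fun v hv => ?_
            rw [← G.card_incidenceFinset_eq_degree v]
            congr 1
            ext e
            simp only [SimpleGraph.mem_incidenceFinset, hEMdef, Finset.mem_filter,
              SimpleGraph.incidenceSet, Set.mem_setOf_eq, SimpleGraph.mem_edgeFinset]
            constructor
            · rintro ⟨he, hve⟩
              exact ⟨⟨he, v, hv, hve⟩, hve⟩
            · rintro ⟨⟨he, _⟩, hve⟩
              exact ⟨he, hve⟩
        _ = ∑ e ∈ EM, (MV.filter (fun v => v ∈ e)).card := by
            simp_rw [Finset.card_filter]
            rw [Finset.sum_comm]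
        _ ≤ ∑ _e ∈ EM, 2 := by
            refine Finset.sum_le_sum fun e _ => ?_
            induction e with
            | h a b =>
              have hsub : MV.filter (fun v => v ∈ s(a, b)) ⊆ {a, b} := by
                intro x hx
                rw [Finset.mem_filter, Sym2.mem_iff] at hx
                simpa using hx.2
              exact (Finset.card_le_card hsub).trans
                ((Finset.card_insert_le _ _).trans (by simp))
        _ = 2 * EM.card := by simp [mul_comm]
    omega
  have h3 : EM.card ≤ G.edgeFinset.card := Finset.card_le_card hEMsub
  omega
end

section
/- Let q ≥ 2 be an integer and let F be a finite simple forest of cacti with exactly k connected components. For each integer i, let γ_i(F) denote the number of cycles of length i in F (counted as subgraphs). Then the number of edges of F satisfies ||F|| ≤ ((q+1)/q)·(|F| − k) + Σ_{i=3}^{q} ((q−i+1)/q)·γ_i(F), where |F| denotes the number of vertices of F. -/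
open SimpleGraph

variable {V : Type*}

section aux
variable {V : Type*} {G : SimpleGraph V}


lemma Walk.firstEdge {x y z : V} {p : G.Walk x y} (hp : p.IsPath)
    (he : s(x, z) ∈ p.edges) : ∃ (h : G.Adj x z) (q : G.Walk z y), p = SimpleGraph.Walk.cons h q := by
  cases p with
  | nil => simp at he
  | @cons _ w0 _ h' q' =>
    rw [SimpleGraph.Walk.edges_cons, List.mem_cons] at he
    rcases he with he | he
    · rw [Sym2.eq_iff] at he
      rcases he with ⟨-, rfl⟩ | ⟨h1, h2⟩
      · exact ⟨h', q', rfl⟩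
      · subst h1; exact absurd h' (G.irrefl)
    · exfalso
      have hx : x ∈ q'.support := SimpleGraph.Walk.fst_mem_support_of_mem_edges q' he
      exact ((SimpleGraph.Walk.cons_isPath_iff h' q').mp hp).2 hx

lemma Walk.exists_split {x y : V} (p : G.Walk x y) (S : Set V)
    (hex : ∃ z ∈ p.support, z ∈ S) :
    ∃ (c : V) (q : G.Walk x c) (r : G.Walk c y), c ∈ S ∧ q.append r = p ∧
      ∀ z ∈ q.support, z ∈ S → z = c := by
  classical
  induction p with
  | nil =>
    obtain ⟨z, hz, hzS⟩ := hex
    simp only [SimpleGraph.Walk.support_nil, List.mem_singleton] at hz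
    subst hz
    exact ⟨_, SimpleGraph.Walk.nil, SimpleGraph.Walk.nil, hzS, rfl, by simp⟩
  | @cons u c0 w h p ih =>
    by_cases hx : u ∈ S
    · refine ⟨u, SimpleGraph.Walk.nil, SimpleGraph.Walk.cons h p, hx, rfl, ?_⟩
      simp
    · obtain ⟨z, hz, hzS⟩ := hex
      rw [SimpleGraph.Walk.support_cons, List.mem_cons] at hz
      rcases hz with rfl | hz
      · exact absurd hzS hx
      · obtain ⟨c, q, r, hcS, hqr, hcond⟩ := ih ⟨z, hz, hzS⟩
        refine ⟨c, SimpleGraph.Walk.cons h q, r, hcS, by rw [SimpleGraph.Walk.cons_append, hqr], ?_⟩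
        intro w hw hwS
        rw [SimpleGraph.Walk.support_cons, List.mem_cons] at hw
        rcases hw with rfl | hw
        · exact absurd hwS hx
        · exact hcond w hw hwS

lemma Walk.mem_support_rotate [DecidableEq V] {a : V} {w : G.Walk a a} (hw : w.IsCycle) {x : V}
    (hx : x ∈ w.support) {z : V} :
    z ∈ (w.rotate x hx).support ↔ z ∈ w.support := by
  have key : ∀ (b : V) (w' : G.Walk b b), ¬w'.Nil → ∀ y, y ∈ w'.support ↔ y ∈ w'.support.tail := by
    intro b w' hnil y
    obtain ⟨u, h, q, rfl⟩ := SimpleGraph.Walk.not_nil_iff.mp hnil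
    simp only [SimpleGraph.Walk.support_cons, List.tail_cons, List.mem_cons]
    constructor
    · rintro (rfl | hy)
      · exact SimpleGraph.Walk.end_mem_support q
      · exact hy
    · exact Or.inr
  have h1 := key a w hw.not_nil z
  have h2 := key x (w.rotate x hx) (hw.rotate hx).not_nil z
  have h3 : (w.rotate x hx).support.tail ~r w.support.tail := SimpleGraph.Walk.support_rotate w x hx
  rw [h2, h3.perm.mem_iff]
  exact h1.symm

/-- Decompose a cycle along one of the edges at its basepoint. -/
lemma Walk.cycle_decomp {a b : V} {w : G.Walk a a} (hw : w.IsCycle) (hf : s(a, b) ∈ w.edges) :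
    ∃ (h : G.Adj a b) (t : G.Walk b a), t.IsPath ∧ w.edges.Perm (s(a, b) :: t.edges) := by
  cases w with
  | nil => exact absurd hw (SimpleGraph.Walk.IsCycle.not_of_nil)
  | @cons _ c _ h' t' =>
    have hct : t'.IsPath ∧ s(a, c) ∉ t'.edges := (SimpleGraph.Walk.cons_isCycle_iff t' h').mp hw
    rw [SimpleGraph.Walk.edges_cons, List.mem_cons] at hf
    rcases hf with hf | hf
    · rw [Sym2.eq_iff] at hf
      rcases hf with ⟨-, rfl⟩ | ⟨rfl, rfl⟩
      · exact ⟨h', t', hct.1, by rw [SimpleGraph.Walk.edges_cons]⟩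
      · exact absurd h' (G.irrefl)
    · -- f is an edge of t' incident to a; it must be the last edge of t'.
      have hrev : s(a, b) ∈ t'.reverse.edges := by
        rw [SimpleGraph.Walk.edges_reverse, List.mem_reverse]; exact hf
      obtain ⟨h₂, r, hr_eq⟩ := Walk.firstEdge hct.1.reverse hrev
      have hr_path : r.IsPath ∧ a ∉ r.support := by
        have := hct.1.reverse
        rw [hr_eq, SimpleGraph.Walk.cons_isPath_iff] at this
        exact this
      refine ⟨h₂, r.append (SimpleGraph.Walk.cons h'.symm SimpleGraph.Walk.nil), ?_, ?_⟩
      · apply SimpleGraph.Walk.IsPath.mk'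
        rw [SimpleGraph.Walk.support_append]
        simp only [SimpleGraph.Walk.support_cons, SimpleGraph.Walk.support_nil, List.tail_cons]
        rw [List.nodup_append']
        refine ⟨hr_path.1.support_nodup, List.nodup_singleton a, ?_⟩
        intro z hz
        simp only [List.mem_singleton]
        rintro rfl
        exact hr_path.2 hz
      · have ht'e : t'.edges = (s(a, b) :: r.edges).reverse := by
          have : t'.reverse.edges = s(a, b) :: r.edges := by
            rw [hr_eq, SimpleGraph.Walk.edges_cons]
          rw [← this, SimpleGraph.Walk.edges_reverse, List.reverse_reverse]
        rw [SimpleGraph.Walk.edges_cons, SimpleGraph.Walk.edges_append, ht'e]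
        simp only [SimpleGraph.Walk.edges_cons, SimpleGraph.Walk.edges_nil]
        have hsw : s(c, a) = s(a, c) := Sym2.eq_swap
        rw [hsw]
        have p1 : List.Perm (s(a, c) :: (s(a, b) :: r.edges).reverse)
            (s(a, c) :: (s(a, b) :: r.edges)) := List.Perm.cons _ (List.reverse_perm _)
        have p2 : List.Perm (s(a, c) :: s(a, b) :: r.edges) (s(a, b) :: s(a, c) :: r.edges) :=
          List.Perm.swap _ _ _
        have p3 : List.Perm (s(a, c) :: r.edges) (r.edges ++ [s(a, c)]) :=
          (List.perm_append_singleton _ _).symm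
        exact (p1.trans p2).trans (List.Perm.cons _ p3)

/-- From two cycles sharing an edge `e`, with `f` an edge of the second not in the first,
extract a path between two distinct vertices of the first cycle, internally disjoint
from it, and containing `f`. -/
lemma Walk.arc [DecidableEq V] {a₁ a₂ : V} {w₁ : G.Walk a₁ a₁} {w₂ : G.Walk a₂ a₂}
    (h₁ : w₁.IsCycle) (h₂ : w₂.IsCycle) {e f : Sym2 V}
    (he₁ : e ∈ w₁.edges) (he₂ : e ∈ w₂.edges) (hf₂ : f ∈ w₂.edges) (hf₁ : f ∉ w₁.edges) :
    ∃ (x y : V) (R : G.Walk x y), R.IsPath ∧ x ≠ y ∧ x ∈ w₁.support ∧ y ∈ w₁.support ∧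
      (∀ z ∈ R.support, z ∈ w₁.support → z = x ∨ z = y) ∧ f ∈ R.edges := by
  set S : Set V := {z | z ∈ w₁.support} with hS
  revert hf₂ hf₁
  induction f using Sym2.ind with | _ a b => ?_
  intro hf₂ hf₁
  revert he₁ he₂
  induction e using Sym2.ind with | _ u₀ v₀ => ?_
  intro he₁ he₂
  have ha2 : a ∈ w₂.support := SimpleGraph.Walk.fst_mem_support_of_mem_edges w₂ hf₂
  have h₂' : (w₂.rotate a ha2).IsCycle := h₂.rotate ha2
  have hfe' : s(a, b) ∈ (w₂.rotate a ha2).edges :=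
    ((SimpleGraph.Walk.rotate_edges w₂ a ha2).perm.mem_iff).mpr hf₂
  have he₂' : s(u₀, v₀) ∈ (w₂.rotate a ha2).edges :=
    ((SimpleGraph.Walk.rotate_edges w₂ a ha2).perm.mem_iff).mpr he₂
  obtain ⟨hab, t₂, ht₂, hperm⟩ := Walk.cycle_decomp h₂' hfe'
  have hne_ef : s(u₀, v₀) ≠ s(a, b) := fun h => hf₁ (h ▸ he₁)
  have he_t₂ : s(u₀, v₀) ∈ t₂.edges := by
    have := hperm.mem_iff.mp he₂'
    rcases List.mem_cons.mp this with h | h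
    · exact absurd h hne_ef
    · exact h
  have hu₀ : u₀ ∈ t₂.support := SimpleGraph.Walk.fst_mem_support_of_mem_edges t₂ he_t₂
  have hv₀ : v₀ ∈ t₂.support := SimpleGraph.Walk.snd_mem_support_of_mem_edges t₂ he_t₂
  have hne_uv : u₀ ≠ v₀ := (w₁.adj_of_mem_edges he₁).ne
  have hu₀S : u₀ ∈ S := SimpleGraph.Walk.fst_mem_support_of_mem_edges w₁ he₁
  have hv₀S : v₀ ∈ S := SimpleGraph.Walk.snd_mem_support_of_mem_edges w₁ he₁
  by_cases haS : a ∈ S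
  · by_cases hbS : b ∈ S
    · -- both endpoints of f on the first cycle
      refine ⟨a, b, SimpleGraph.Walk.cons hab SimpleGraph.Walk.nil, ?_, hab.ne, haS, hbS, ?_, ?_⟩
      · exact SimpleGraph.Walk.IsPath.mk' (by simp [hab.ne])
      · intro z hz _
        simp only [SimpleGraph.Walk.support_cons, SimpleGraph.Walk.support_nil,
          List.mem_cons, List.mem_singleton] at hz
        tauto
      · simp
    · -- a on the cycle, b not
      obtain ⟨y₁, q₁, r, hy₁S, happ, hcond⟩ :=
        Walk.exists_split t₂ S ⟨a, t₂.end_mem_support, haS⟩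
      have hqr : (q₁.append r).IsPath := by rw [happ]; exact ht₂
      have hq₁ : q₁.IsPath := hqr.of_append_left
      have hr : r.IsPath := hqr.of_append_right
      -- a third vertex of S on t₂, distinct from a
      have hz₀ : ∃ z₀, z₀ ∈ t₂.support ∧ z₀ ∈ S ∧ z₀ ≠ a := by
        rcases eq_or_ne u₀ a with rfl | hua
        · exact ⟨v₀, hv₀, hv₀S, fun h => hne_uv h.symm⟩
        · exact ⟨u₀, hu₀, hu₀S, hua⟩
      have hy₁a : y₁ ≠ a := by
        rintro rfl
        have hrnil : r = SimpleGraph.Walk.nil := (SimpleGraph.Walk.isPath_iff_eq_nil (p := r)).mp hr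
        rw [hrnil, SimpleGraph.Walk.append_nil] at happ
        obtain ⟨z₀, hz₀t, hz₀S, hz₀a⟩ := hz₀
        exact hz₀a (hcond z₀ (happ ▸ hz₀t) hz₀S)
      -- a is not on q₁
      have hdisj : ∀ z ∈ q₁.support, z ∉ r.support.tail := by
        have := ht₂.support_nodup
        rw [← happ, SimpleGraph.Walk.support_append] at this
        exact fun z hz => (List.disjoint_of_nodup_append this) hz
      have haq₁ : a ∉ q₁.support := by
        intro hmem
        have har : a ∈ r.support := r.end_mem_support
        rw [SimpleGraph.Walk.support_eq_cons] at har
        rcases List.mem_cons.mp har with h | h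
        · exact hy₁a h.symm
        · exact hdisj a hmem h
      refine ⟨a, y₁, SimpleGraph.Walk.cons hab q₁, ?_, fun h => hy₁a h.symm, haS, hy₁S, ?_, ?_⟩
      · exact hq₁.cons haq₁
      · intro z hz hzS
        rcases List.mem_cons.mp (by simpa using hz) with rfl | hz'
        · exact Or.inl rfl
        · exact Or.inr (hcond z hz' hzS)
      · simp
  · -- a not on the first cycle
    have hu₀t : u₀ ∈ t₂.support := hu₀
    obtain ⟨y₁, q₁, r, hy₁S, happ, hcond₁⟩ := Walk.exists_split t₂ S ⟨u₀, hu₀, hu₀S⟩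
    have hqr : (q₁.append r).IsPath := by rw [happ]; exact ht₂
    have hq₁ : q₁.IsPath := hqr.of_append_left
    have hr : r.IsPath := hqr.of_append_right
    have hy₁a : y₁ ≠ a := fun h => haS (h ▸ hy₁S)
    have hdisj : ∀ z ∈ q₁.support, z ∉ r.support.tail := by
      have := ht₂.support_nodup
      rw [← happ, SimpleGraph.Walk.support_append] at this
      exact fun z hz => (List.disjoint_of_nodup_append this) hz
    -- a second S-vertex, in r
    have hz₁ : ∃ z₁, z₁ ∈ r.support ∧ z₁ ∈ S ∧ z₁ ≠ y₁ := by
      have key : ∀ z₀, z₀ ∈ t₂.support → z₀ ∈ S → z₀ ≠ y₁ → z₀ ∈ r.support := by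
        intro z₀ hz₀t hz₀S hz₀y
        rw [← happ, SimpleGraph.Walk.mem_support_append_iff] at hz₀t
        rcases hz₀t with h | h
        · exact absurd (hcond₁ z₀ h hz₀S) hz₀y
        · exact h
      rcases eq_or_ne u₀ y₁ with rfl | huy
      · exact ⟨v₀, key v₀ hv₀ hv₀S (fun h => hne_uv h.symm), hv₀S, fun h => hne_uv h.symm⟩
      · exact ⟨u₀, key u₀ hu₀ hu₀S huy, hu₀S, huy⟩
    obtain ⟨z₁, hz₁r, hz₁S, hz₁y⟩ := hz₁
    have hz₁rev : z₁ ∈ r.reverse.support := by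
      rw [SimpleGraph.Walk.support_reverse, List.mem_reverse]; exact hz₁r
    obtain ⟨w₁', q₂, r₂, hw₁S, happ₂, hcond₂⟩ := Walk.exists_split r.reverse S ⟨z₁, hz₁rev, hz₁S⟩
    have hqr₂ : (q₂.append r₂).IsPath := by rw [happ₂]; exact hr.reverse
    have hq₂ : q₂.IsPath := hqr₂.of_append_left
    have hw₁y : w₁' ≠ y₁ := by
      rintro rfl
      have hr₂nil : r₂ = SimpleGraph.Walk.nil := (SimpleGraph.Walk.isPath_iff_eq_nil (p := r₂)).mp
        hqr₂.of_append_right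
      rw [hr₂nil, SimpleGraph.Walk.append_nil] at happ₂
      exact hz₁y (hcond₂ z₁ (happ₂ ▸ hz₁rev) hz₁S)
    have hq₂sub : ∀ z ∈ q₂.support, z ∈ r.support := by
      intro z hz
      have : z ∈ r.reverse.support := by
        rw [← happ₂]; exact SimpleGraph.Walk.subset_support_append_left _ _ hz
      rwa [SimpleGraph.Walk.support_reverse, List.mem_reverse] at this
    have hy₁q₂ : y₁ ∉ q₂.support := by
      intro h
      exact hw₁y (hcond₂ y₁ h hy₁S).symm
    have hdisj₂ : ∀ z ∈ q₁.support, z ∉ q₂.support := by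
      intro z hz hz₂
      have hzr : z ∈ r.support := hq₂sub z hz₂
      rw [SimpleGraph.Walk.support_eq_cons] at hzr
      rcases List.mem_cons.mp hzr with rfl | h
      · exact hy₁q₂ hz₂
      · exact hdisj z hz h
    have haq₁ : a ∉ q₁.support := by
      intro hmem
      have har : a ∈ r.support := r.end_mem_support
      rw [SimpleGraph.Walk.support_eq_cons] at har
      rcases List.mem_cons.mp har with h | h
      · exact hy₁a h.symm
      · exact hdisj a hmem h
    -- R := q₂.reverse ++ (a-b edge) ++ q₁
    refine ⟨w₁', y₁, q₂.reverse.append (SimpleGraph.Walk.cons hab q₁), ?_, hw₁y, hw₁S, hy₁S,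
      ?_, ?_⟩
    · apply SimpleGraph.Walk.IsPath.mk'
      rw [SimpleGraph.Walk.support_append, SimpleGraph.Walk.support_cons, List.tail_cons]
      rw [List.nodup_append']
      refine ⟨hq₂.reverse.support_nodup, hq₁.support_nodup, ?_⟩
      intro z hz
      rw [SimpleGraph.Walk.support_reverse, List.mem_reverse] at hz
      exact fun h => hdisj₂ z h hz
    · intro z hz hzS
      rw [SimpleGraph.Walk.mem_support_append_iff] at hz
      rcases hz with hz | hz
      · rw [SimpleGraph.Walk.support_reverse, List.mem_reverse] at hz
        exact Or.inl (hcond₂ z hz hzS)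
      · rcases List.mem_cons.mp (by simpa using hz) with rfl | hz'
        · exact absurd hzS haS
        · exact Or.inr (hcond₁ z hz' hzS)
    · rw [SimpleGraph.Walk.edges_append, SimpleGraph.Walk.edges_cons]
      simp

/-- Two cycles sharing an edge, one having an edge not on the other, give a diamond. -/
lemma Walk.diamond_of_two [DecidableEq V] {a₁ a₂ : V} {w₁ : G.Walk a₁ a₁} {w₂ : G.Walk a₂ a₂}
    (h₁ : w₁.IsCycle) (h₂ : w₂.IsCycle) {e f : Sym2 V}
    (he₁ : e ∈ w₁.edges) (he₂ : e ∈ w₂.edges) (hf₂ : f ∈ w₂.edges) (hf₁ : f ∉ w₁.edges) :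
    Nonempty G.Diamond := by
  obtain ⟨x, y, R, hR, hxy, hxS, hyS, hcond, hfR⟩ := Walk.arc h₁ h₂ he₁ he₂ hf₂ hf₁
  -- split the first cycle at x and y
  set wc := w₁.rotate x hxS with hwc_def
  have hwc : wc.IsCycle := h₁.rotate hxS
  have hmemc : ∀ z : V, z ∈ wc.support ↔ z ∈ w₁.support :=
    fun z => Walk.mem_support_rotate h₁ hxS
  have hedgec : ∀ g : Sym2 V, g ∈ wc.edges ↔ g ∈ w₁.edges :=
    fun g => (SimpleGraph.Walk.rotate_edges w₁ x hxS).perm.mem_iff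
  obtain ⟨c, hxc, t, ht_eq⟩ := SimpleGraph.Walk.not_nil_iff.mp hwc.not_nil
  have hct : t.IsPath ∧ s(x, c) ∉ t.edges := by
    rw [ht_eq, SimpleGraph.Walk.cons_isCycle_iff] at hwc
    exact hwc
  have hyt : y ∈ t.support := by
    have : y ∈ wc.support := (hmemc y).mpr hyS
    rw [ht_eq, SimpleGraph.Walk.support_cons] at this
    rcases List.mem_cons.mp this with h | h
    · exact absurd h.symm hxy
    · exact h
  set A' := t.takeUntil y hyt with hA'
  set B := t.dropUntil y hyt with hB
  have hspec : A'.append B = t := SimpleGraph.Walk.take_spec t hyt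
  have hA'path : A'.IsPath := hct.1.takeUntil hyt
  have hBpath : B.IsPath := hct.1.dropUntil hyt
  have hdisj : ∀ z ∈ A'.support, z ∉ B.support.tail := by
    have := hct.1.support_nodup
    rw [← hspec, SimpleGraph.Walk.support_append] at this
    exact fun z hz => (List.disjoint_of_nodup_append this) hz
  have hxA' : x ∉ A'.support := by
    intro hmem
    have hxB : x ∈ B.support := B.end_mem_support
    rw [SimpleGraph.Walk.support_eq_cons] at hxB
    rcases List.mem_cons.mp hxB with h | h
    · exact hxy h
    · exact hdisj x hmem h
  have hA'sub : ∀ z ∈ A'.support, z ∈ w₁.support := by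
    intro z hz
    have : z ∈ t.support := SimpleGraph.Walk.support_takeUntil_subset t hyt hz
    rw [← hmemc z, ht_eq, SimpleGraph.Walk.support_cons]
    exact List.mem_cons_of_mem _ this
  have hBsub : ∀ z ∈ B.support, z ∈ w₁.support := by
    intro z hz
    have : z ∈ t.support := SimpleGraph.Walk.support_dropUntil_subset t hyt hz
    rw [← hmemc z, ht_eq, SimpleGraph.Walk.support_cons]
    exact List.mem_cons_of_mem _ this
  have htsub : ∀ g ∈ t.edges, g ∈ w₁.edges := by
    intro g hg
    rw [← hedgec g, ht_eq, SimpleGraph.Walk.edges_cons]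
    exact List.mem_cons_of_mem _ hg
  have hAedge : ∀ g ∈ (SimpleGraph.Walk.cons hxc A').edges, g ∈ w₁.edges := by
    intro g hg
    rcases List.mem_cons.mp (by simpa using hg) with rfl | hg'
    · exact (hedgec _).mp (by rw [ht_eq]; simp)
    · exact htsub g (SimpleGraph.Walk.edges_takeUntil_subset t hyt hg')
  have hBedge : ∀ g ∈ B.reverse.edges, g ∈ w₁.edges := by
    intro g hg
    rw [SimpleGraph.Walk.edges_reverse, List.mem_reverse] at hg
    exact htsub g (SimpleGraph.Walk.edges_dropUntil_subset t hyt hg)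
  refine ⟨⟨x, y, hxy, SimpleGraph.Walk.cons hxc A', B.reverse, R,
    hA'path.cons hxA', hBpath.reverse, hR, ?_, ?_, ?_, ?_, ?_, ?_⟩⟩
  · -- A ≠ B.reverse
    intro hEq
    have h1 : s(x, c) ∈ (SimpleGraph.Walk.cons hxc A').edges := by simp
    rw [hEq, SimpleGraph.Walk.edges_reverse, List.mem_reverse] at h1
    exact hct.2 (SimpleGraph.Walk.edges_dropUntil_subset t hyt h1)
  · -- A ≠ R
    intro hEq
    have h1 : f ∈ (SimpleGraph.Walk.cons hxc A').edges := hEq ▸ hfR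
    exact hf₁ (hAedge f h1)
  · -- B.reverse ≠ R
    intro hEq
    have h1 : f ∈ B.reverse.edges := hEq ▸ hfR
    exact hf₁ (hBedge f h1)
  · -- disj A B.reverse
    intro z hzA hzB
    rw [SimpleGraph.Walk.support_reverse, List.mem_reverse] at hzB
    rcases List.mem_cons.mp (by simpa using hzA) with rfl | hzA'
    · exact Or.inl rfl
    · rw [SimpleGraph.Walk.support_eq_cons] at hzB
      rcases List.mem_cons.mp hzB with rfl | h
      · exact Or.inr rfl
      · exact absurd h (hdisj z hzA')
  · -- disj A R
    intro z hzA hzR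
    rcases List.mem_cons.mp (by simpa using hzA) with rfl | hzA'
    · exact hcond z hzR (hmemc z |>.mp (by rw [ht_eq]; simp))
    · exact hcond z hzR (hA'sub z hzA')
  · -- disj B.reverse R
    intro z hzB hzR
    rw [SimpleGraph.Walk.support_reverse, List.mem_reverse] at hzB
    exact hcond z hzR (hBsub z hzB)

variable [DecidableEq V]

lemma Walk.cycle_ncard {a : V} {w : G.Walk a a} (hw : w.IsCycle) :
    ({e | e ∈ w.edges} : Set (Sym2 V)).ncard = w.length := by
  have h : ({e | e ∈ w.edges} : Set (Sym2 V)) = ↑w.edges.toFinset := by ext g; simp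
  rw [h, Set.ncard_coe_finset, List.toFinset_card_of_nodup hw.edges_nodup,
    SimpleGraph.Walk.length_edges]

lemma cycleSetLen_eq (i : ℕ) :
    G.cycleSetLen i = {s | s ∈ G.cycleSet ∧ s.ncard = i} := by
  ext s
  constructor
  · rintro ⟨v, w, hw, hlen, rfl⟩
    exact ⟨⟨v, w, hw, rfl⟩, by rw [Walk.cycle_ncard hw, hlen]⟩
  · rintro ⟨⟨v, w, hw, rfl⟩, hlen⟩
    exact ⟨v, w, hw, by rw [← Walk.cycle_ncard hw]; exact hlen, rfl⟩

lemma cycleSet_ncard_mem [Fintype V] {s : Set (Sym2 V)} (hs : s ∈ G.cycleSet) :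
    3 ≤ s.ncard ∧ s.ncard ≤ Fintype.card V := by
  obtain ⟨v, w, hw, rfl⟩ := hs
  rw [Walk.cycle_ncard hw]
  refine ⟨hw.three_le_length, ?_⟩
  have h1 : w.support.tail.length = w.length := by
    have := SimpleGraph.Walk.length_support w
    simp only [List.length_tail, this]
    omega
  rw [← h1]
  exact hw.2.length_le_card


lemma cycleSet_edges_subset {s : Set (Sym2 V)} (hs : s ∈ G.cycleSet) : s ⊆ G.edgeSet := by
  obtain ⟨v, w, hw, rfl⟩ := hs
  exact fun g hg => w.edges_subset_edgeSet hg

lemma cycleSet_disjoint (hdf : IsEmpty G.Diamond) {s t : Set (Sym2 V)}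
    (hs : s ∈ G.cycleSet) (ht : t ∈ G.cycleSet) (hst : s ≠ t) : Disjoint s t := by
  rw [Set.disjoint_left]
  intro e hes het
  obtain ⟨v₁, w₁, hw₁, rfl⟩ := hs
  obtain ⟨v₂, w₂, hw₂, rfl⟩ := ht
  have he₁ : e ∈ w₁.edges := hes
  have he₂ : e ∈ w₂.edges := het
  by_cases hgg : ∃ g ∈ w₂.edges, g ∉ w₁.edges
  · obtain ⟨g, hg₂, hg₁⟩ := hgg
    obtain ⟨D⟩ := Walk.diamond_of_two hw₁ hw₂ he₁ he₂ hg₂ hg₁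
    exact hdf.false D
  · push_neg at hgg
    have hgg' : ∃ g ∈ w₁.edges, g ∉ w₂.edges := by
      by_contra h
      push_neg at h
      exact hst (Set.ext fun g => ⟨fun hg => h g hg, fun hg => hgg g hg⟩)
    obtain ⟨g, hg₁, hg₂⟩ := hgg'
    obtain ⟨D⟩ := Walk.diamond_of_two hw₂ hw₁ he₂ he₁ hg₁ hg₂
    exact hdf.false D

variable [Fintype V]

lemma cycleSet_card_eq (M : ℕ) (hM : Fintype.card V ≤ M) :
    G.cycleSet.ncard = ∑ i ∈ Finset.Icc 3 M, (G.cycleSetLen i).ncard := by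
  classical
  set C : Finset (Set (Sym2 V)) := (Set.toFinite G.cycleSet).toFinset with hC
  have hmem : ∀ s, s ∈ C ↔ s ∈ G.cycleSet := fun s => Set.Finite.mem_toFinset _
  have hkey : ∀ s ∈ C, s.ncard ∈ Finset.Icc 3 M := by
    intro s hs
    obtain ⟨h3, hn⟩ := cycleSet_ncard_mem ((hmem s).mp hs)
    exact Finset.mem_Icc.mpr ⟨h3, le_trans hn hM⟩
  have hfib : ∀ i, (G.cycleSetLen i).ncard = (C.filter fun s => s.ncard = i).card := by
    intro i
    have h : G.cycleSetLen i = ↑(C.filter fun s => s.ncard = i) := by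
      rw [cycleSetLen_eq]
      ext s
      simp [Finset.mem_filter, hmem s]
    rw [h, Set.ncard_coe_finset]
  have h1 : G.cycleSet.ncard = C.card := by
    rw [Set.ncard_eq_toFinset_card]
  rw [h1, Finset.card_eq_sum_card_fiberwise hkey]
  exact Finset.sum_congr rfl fun i _ => (hfib i).symm

lemma cycleSet_len_sum_le (hdf : IsEmpty G.Diamond) (M : ℕ) :
    ∑ i ∈ Finset.Icc 3 M, i * (G.cycleSetLen i).ncard ≤ G.edgeSet.ncard := by
  classical
  set C : Finset (Set (Sym2 V)) := (Set.toFinite G.cycleSet).toFinset with hC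
  have hmem : ∀ s, s ∈ C ↔ s ∈ G.cycleSet := fun s => Set.Finite.mem_toFinset _
  have hfib : ∀ i, (G.cycleSetLen i).ncard = (C.filter fun s => s.ncard = i).card := by
    intro i
    have h : G.cycleSetLen i = ↑(C.filter fun s => s.ncard = i) := by
      rw [cycleSetLen_eq]
      ext s
      simp [Finset.mem_filter, hmem s]
    rw [h, Set.ncard_coe_finset]
  have step1 : ∑ i ∈ Finset.Icc 3 M, i * (G.cycleSetLen i).ncard
      = ∑ i ∈ Finset.Icc 3 M, ∑ s ∈ C.filter (fun s => s.ncard = i), s.ncard := by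
    refine Finset.sum_congr rfl fun i _ => ?_
    rw [hfib i]
    rw [Finset.sum_congr rfl (fun s hs => (Finset.mem_filter.mp hs).2), Finset.sum_const,
      smul_eq_mul, mul_comm]
  rw [step1]
  have step2 : ∑ i ∈ Finset.Icc 3 M, ∑ s ∈ C.filter (fun s => s.ncard = i), s.ncard
      ≤ ∑ s ∈ C, s.ncard := by
    have hto : ∀ s ∈ C.filter (fun s => s.ncard ∈ Finset.Icc 3 M), s.ncard ∈ Finset.Icc 3 M :=
      fun s hs => (Finset.mem_filter.mp hs).2
    have e1 := Finset.sum_fiberwise_of_maps_to hto (fun s => s.ncard)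
    have e2 : ∀ i ∈ Finset.Icc 3 M,
        (C.filter (fun s => s.ncard ∈ Finset.Icc 3 M)).filter (fun s => s.ncard = i)
          = C.filter (fun s => s.ncard = i) := by
      intro i hi
      ext s
      simp only [Finset.mem_filter]
      constructor
      · rintro ⟨⟨h1, -⟩, h2⟩; exact ⟨h1, h2⟩
      · rintro ⟨h1, h2⟩; exact ⟨⟨h1, h2 ▸ hi⟩, h2⟩
    rw [Finset.sum_congr rfl (fun i hi => by rw [← e2 i hi]), e1]
    exact Finset.sum_le_sum_of_subset (Finset.filter_subset _ _)
  refine le_trans step2 ?_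
  -- pairwise disjoint edge sets
  have hdisj : ∀ s ∈ C, ∀ t ∈ C, s ≠ t →
      Disjoint ((Set.toFinite s).toFinset) ((Set.toFinite t).toFinset) := by
    intro s hs t ht hst
    rw [Set.Finite.disjoint_toFinset]
    exact cycleSet_disjoint hdf ((hmem s).mp hs) ((hmem t).mp ht) hst
  have h1 : ∑ s ∈ C, s.ncard = ∑ s ∈ C, ((Set.toFinite s).toFinset).card :=
    Finset.sum_congr rfl fun s _ => Set.ncard_eq_toFinset_card s
  rw [h1, ← Finset.card_biUnion hdisj]
  have hsub : (C.biUnion fun s => (Set.toFinite s).toFinset) ⊆ (Set.toFinite G.edgeSet).toFinset := by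
    intro g hg
    rw [Finset.mem_biUnion] at hg
    obtain ⟨s, hs, hgs⟩ := hg
    rw [Set.Finite.mem_toFinset] at hgs ⊢
    exact cycleSet_edges_subset ((hmem s).mp hs) hgs
  calc (C.biUnion fun s => (Set.toFinite s).toFinset).card
      ≤ ((Set.toFinite G.edgeSet).toFinset).card := Finset.card_le_card hsub
    _ = G.edgeSet.ncard := (Set.ncard_eq_toFinset_card _).symm

lemma ncard_sdiff_singleton {α : Type*} {s : Set α} {x : α} (hx : x ∈ s) (hfin : s.Finite) :
    (s \ {x}).ncard + 1 = s.ncard := by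
  have h1 := Set.ncard_insert_of_notMem (show x ∉ s \ {x} by simp) hfin.diff
  rw [Set.insert_diff_singleton, Set.insert_eq_of_mem hx] at h1
  omega

lemma cycleSet_mono {G₁ G₂ : SimpleGraph V} (hle : G₁ ≤ G₂) :
    G₁.cycleSet ⊆ G₂.cycleSet := by
  rintro s ⟨v, w, hw, rfl⟩
  have hsub : ∀ g ∈ w.edges, g ∈ G₂.edgeSet :=
    fun g hg => SimpleGraph.edgeSet_mono hle (w.edges_subset_edgeSet hg)
  exact ⟨v, w.transfer G₂ hsub, hw.transfer hsub, by
    ext g; rw [SimpleGraph.Walk.edges_transfer]⟩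

lemma reach_del {u v : V} (hr : (G \ fromEdgeSet {s(u, v)}).Reachable u v) {a b : V}
    (hab : G.Reachable a b) : (G \ fromEdgeSet {s(u, v)}).Reachable a b := by
  obtain ⟨p⟩ := hab
  induction p with
  | nil => exact SimpleGraph.Reachable.refl _
  | @cons a c b hac p ih =>
    refine SimpleGraph.Reachable.trans ?_ ih
    by_cases hEq : s(a, c) = s(u, v)
    · rw [Sym2.eq_iff] at hEq
      rcases hEq with ⟨rfl, rfl⟩ | ⟨rfl, rfl⟩
      · exact hr
      · exact hr.symm
    · refine SimpleGraph.Adj.reachable ?_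
      rw [SimpleGraph.sdiff_adj]
      exact ⟨hac, fun hc => hEq ((SimpleGraph.fromEdgeSet_adj _).mp hc).1⟩

lemma card_cc_eq {G₁ G₂ : SimpleGraph V}
    (h : ∀ a b, G₁.Reachable a b ↔ G₂.Reachable a b) :
    Nat.card G₁.ConnectedComponent = Nat.card G₂.ConnectedComponent := by
  refine Nat.card_congr ⟨Quot.map id (fun a b hab => (h a b).mp hab),
    Quot.map id (fun a b hab => (h a b).mpr hab), ?_, ?_⟩ <;>
    · intro c
      induction c using SimpleGraph.ConnectedComponent.ind with
      | _ v => rfl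

lemma ncard_est : ∀ (n : ℕ) (G : SimpleGraph V), G.edgeSet.ncard = n →
    G.edgeSet.ncard + Nat.card G.ConnectedComponent ≤ Fintype.card V + G.cycleSet.ncard := by
  intro n
  induction n using Nat.strong_induction_on with
  | _ n ih =>
  intro G hn
  by_cases hcyc : ∃ (a : V) (w : G.Walk a a), w.IsCycle
  · obtain ⟨a, w, hw⟩ := hcyc
    have hw_edges_ne : w.edges ≠ [] := by
      intro h
      have h3 := hw.three_le_length
      rw [← SimpleGraph.Walk.length_edges, h] at h3
      simp at h3
    have huv : ∃ u v, s(u, v) ∈ w.edges := by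
      obtain ⟨e, he⟩ := List.exists_mem_of_ne_nil _ hw_edges_ne
      revert he
      induction e using Sym2.ind with
      | _ u v => exact fun he => ⟨u, v, he⟩
    obtain ⟨u, v, he⟩ := huv
    set G' := G \ fromEdgeSet {s(u, v)} with hG'
    have hles : G' ≤ G := sdiff_le
    have hedge' : G'.edgeSet = G.edgeSet \ {s(u, v)} := by
      rw [hG', SimpleGraph.edgeSet_sdiff, SimpleGraph.edgeSet_fromEdgeSet,
        SimpleGraph.edgeSet_sdiff_sdiff_isDiag]
    have hmeme : s(u, v) ∈ G.edgeSet := w.edges_subset_edgeSet he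
    have hm' : G'.edgeSet.ncard + 1 = n := by
      rw [hedge', ← hn]
      exact ncard_sdiff_singleton hmeme (Set.toFinite _)
    have hdel : G'.Reachable u v :=
      (SimpleGraph.adj_and_reachable_delete_edges_iff_exists_cycle.mpr ⟨a, w, hw, he⟩).2
    have hreach : ∀ a b, G'.Reachable a b ↔ G.Reachable a b :=
      fun a b => ⟨fun h => h.mono hles, fun h => reach_del hdel h⟩
    have hk : Nat.card G'.ConnectedComponent = Nat.card G.ConnectedComponent :=
      card_cc_eq hreach
    set sw : Set (Sym2 V) := {g | g ∈ w.edges} with hsw_def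
    have hsw : sw ∈ G.cycleSet := ⟨a, w, hw, rfl⟩
    have hsub : G'.cycleSet ⊆ G.cycleSet \ {sw} := by
      rintro s hs
      refine ⟨cycleSet_mono hles hs, ?_⟩
      obtain ⟨v₀, w₀, hw₀, rfl⟩ := hs
      intro hEq
      rw [Set.mem_singleton_iff] at hEq
      have h1 : s(u, v) ∈ sw := he
      rw [← hEq] at h1
      have h2 : s(u, v) ∈ G'.edgeSet := w₀.edges_subset_edgeSet h1
      rw [hedge'] at h2
      exact h2.2 rfl
    have hc : G'.cycleSet.ncard + 1 ≤ G.cycleSet.ncard := by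
      have h1 : G'.cycleSet.ncard ≤ (G.cycleSet \ {sw}).ncard :=
        Set.ncard_le_ncard hsub (Set.toFinite _)
      have h2 := ncard_sdiff_singleton hsw (Set.toFinite G.cycleSet)
      omega
    have IH := ih (n - 1) (by omega) G' (by omega)
    omega
  · by_cases hn0 : n = 0
    · subst hn0
      have hbot : G = ⊥ := by
        rw [← SimpleGraph.edgeSet_eq_empty]
        exact (Set.ncard_eq_zero (Set.toFinite _)).mp hn
      subst hbot
      have hcard : Nat.card (⊥ : SimpleGraph V).ConnectedComponent = Fintype.card V := by
        rw [← Nat.card_eq_fintype_card]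
        refine (Nat.card_eq_of_bijective (⊥ : SimpleGraph V).connectedComponentMk ⟨?_, ?_⟩).symm
        · intro a b hab
          exact (SimpleGraph.reachable_bot).mp (SimpleGraph.ConnectedComponent.exact hab)
        · intro c
          induction c using SimpleGraph.ConnectedComponent.ind with
          | _ v => exact ⟨v, rfl⟩
      rw [hn, hcard]
      omega
    · have hne : G.edgeSet.Nonempty := by
        rw [Set.nonempty_iff_ne_empty]
        intro h
        rw [← Set.ncard_eq_zero (Set.toFinite _)] at h
        omega
      have huv : ∃ u v, s(u, v) ∈ G.edgeSet := by
        obtain ⟨e, he⟩ := hne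
        revert he
        induction e using Sym2.ind with
        | _ u v => exact fun he => ⟨u, v, he⟩
      obtain ⟨u, v, he⟩ := huv
      have hadj : G.Adj u v := he
      set G' := G \ fromEdgeSet {s(u, v)} with hG'
      have hles : G' ≤ G := sdiff_le
      have hedge' : G'.edgeSet = G.edgeSet \ {s(u, v)} := by
        rw [hG', SimpleGraph.edgeSet_sdiff, SimpleGraph.edgeSet_fromEdgeSet,
          SimpleGraph.edgeSet_sdiff_sdiff_isDiag]
      have hm' : G'.edgeSet.ncard + 1 = n := by
        rw [hedge', ← hn]
        exact ncard_sdiff_singleton he (Set.toFinite _)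
      have hnr : ¬G'.Reachable u v := by
        intro hr
        obtain ⟨a, w, hw, -⟩ :=
          SimpleGraph.adj_and_reachable_delete_edges_iff_exists_cycle.mp ⟨hadj, hr⟩
        exact hcyc ⟨a, w, hw⟩
      set φ : G'.ConnectedComponent → G.ConnectedComponent :=
        SimpleGraph.ConnectedComponent.map (SimpleGraph.Hom.ofLE hles) with hφ
      have hsurj : Function.Surjective φ := by
        intro c
        induction c using SimpleGraph.ConnectedComponent.ind with
        | _ v => exact ⟨G'.connectedComponentMk v, rfl⟩
      have hninj : ¬Function.Injective φ := by
        intro hinj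
        have h1 : φ (G'.connectedComponentMk u) = φ (G'.connectedComponentMk v) := by
          simp only [hφ, SimpleGraph.ConnectedComponent.map_mk]
          exact SimpleGraph.ConnectedComponent.sound hadj.reachable
        exact hnr (SimpleGraph.ConnectedComponent.exact (hinj h1))
      have hklt : Nat.card G.ConnectedComponent < Nat.card G'.ConnectedComponent := by
        letI := Fintype.ofFinite G.ConnectedComponent
        letI := Fintype.ofFinite G'.ConnectedComponent
        rw [Nat.card_eq_fintype_card, Nat.card_eq_fintype_card]
        exact Fintype.card_lt_of_surjective_not_injective φ hsurj hninj
      have hc : G'.cycleSet.ncard ≤ G.cycleSet.ncard :=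
        Set.ncard_le_ncard (cycleSet_mono hles) (Set.toFinite _)
      have IH := ih (n - 1) (by omega) G' (by omega)
      omega

end aux

/-- Bound on the number of edges of a forest of cacti (a finite simple graph with no diamond)
with `k` connected components:
`‖F‖ ≤ ((q+1)/q)·(|F| − k) + Σ_{i=3}^{q} ((q−i+1)/q)·γ_i(F)`. -/
theorem forest_of_cacti_edge_bound (V : Type*) [Fintype V] [DecidableEq V]
    (G : SimpleGraph V) [DecidableRel G.Adj] (q : ℕ) (hq : 2 ≤ q)
    (hdiamondfree : IsEmpty G.Diamond)
    (k : ℕ) (hk : Nat.card G.ConnectedComponent = k) :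
    (G.edgeFinset.card : ℝ) ≤
      ((q : ℝ) + 1) / q * ((Fintype.card V : ℝ) - k) +
        ∑ i ∈ Finset.Icc 3 q, ((q : ℝ) - i + 1) / q * (G.cycleSetLen i).ncard := by
  classical
  subst hk
  set M : ℕ := max (Fintype.card V) q with hM
  have hL1 := ncard_est (G.edgeSet.ncard) G rfl
  have hLA := cycleSet_card_eq (G := G) M (le_max_left _ _)
  have hLB := cycleSet_len_sum_le (G := G) hdiamondfree M
  have hmcard : G.edgeFinset.card = G.edgeSet.ncard := by
    rw [← SimpleGraph.coe_edgeFinset G, Set.ncard_coe_finset]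
  rw [hmcard]
  have hγ0 : ∀ i : ℕ, (0:ℝ) ≤ ((G.cycleSetLen i).ncard : ℝ) := fun i => Nat.cast_nonneg _
  have hF1 : (G.edgeSet.ncard : ℝ) + (Nat.card G.ConnectedComponent : ℝ)
      ≤ (Fintype.card V : ℝ) + (G.cycleSet.ncard : ℝ) := by exact_mod_cast hL1
  have hFA : (G.cycleSet.ncard : ℝ) = ∑ i ∈ Finset.Icc 3 M, ((G.cycleSetLen i).ncard : ℝ) := by
    exact_mod_cast congrArg (Nat.cast : ℕ → ℝ) hLA
  have hF2 : ∑ i ∈ Finset.Icc 3 M, (i : ℝ) * ((G.cycleSetLen i).ncard : ℝ)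
      ≤ (G.edgeSet.ncard : ℝ) := by exact_mod_cast hLB
  have hq0 : (0:ℝ) < (q : ℝ) := by
    have : 0 < q := by omega
    exact_mod_cast this
  have hgoal : ((q : ℝ) + 1) / q * ((Fintype.card V : ℝ) - (Nat.card G.ConnectedComponent : ℝ)) +
      ∑ i ∈ Finset.Icc 3 q, ((q : ℝ) - i + 1) / q * ((G.cycleSetLen i).ncard : ℝ)
      = (((q : ℝ) + 1) * ((Fintype.card V : ℝ) - (Nat.card G.ConnectedComponent : ℝ)) +
        ∑ i ∈ Finset.Icc 3 q, ((q : ℝ) - i + 1) * ((G.cycleSetLen i).ncard : ℝ)) / q := by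
    simp_rw [div_mul_eq_mul_div]
    rw [← Finset.sum_div, ← add_div]
  rw [hgoal, le_div_iff₀ hq0]
  set F : ℕ → ℝ := fun i => (if i ≤ q then ((q : ℝ) - i + 1) else 0) * ((G.cycleSetLen i).ncard : ℝ)
    with hF
  have e1 : ∑ i ∈ Finset.Icc 3 q, ((q : ℝ) - i + 1) * ((G.cycleSetLen i).ncard : ℝ)
      = ∑ i ∈ Finset.Icc 3 q, F i :=
    Finset.sum_congr rfl fun i hi => by
      rw [hF]; simp only []; rw [if_pos (Finset.mem_Icc.mp hi).2]
  have e2 : ∑ i ∈ Finset.Icc 3 q, F i = ∑ i ∈ Finset.Icc 3 M, F i := by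
    refine Finset.sum_subset (Finset.Icc_subset_Icc_right (le_max_right _ _)) ?_
    intro i hi hni
    have h3 : 3 ≤ i := (Finset.mem_Icc.mp hi).1
    have hgt : ¬ i ≤ q := fun h => hni (Finset.mem_Icc.mpr ⟨h3, h⟩)
    rw [hF]; simp only []; rw [if_neg hgt, zero_mul]
  have hterm : ∀ i ∈ Finset.Icc 3 M, (q : ℝ) * ((G.cycleSetLen i).ncard : ℝ)
      ≤ ((i : ℝ) - 1) * ((G.cycleSetLen i).ncard : ℝ) + F i := by
    intro i hi
    rw [hF]; simp only []
    by_cases hiq : i ≤ q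
    · rw [if_pos hiq]
      have : ((i : ℝ) - 1) * ((G.cycleSetLen i).ncard : ℝ)
          + ((q : ℝ) - i + 1) * ((G.cycleSetLen i).ncard : ℝ)
          = (q : ℝ) * ((G.cycleSetLen i).ncard : ℝ) := by ring
      linarith
    · rw [if_neg hiq, zero_mul, add_zero]
      have hqi : (q : ℝ) + 1 ≤ (i : ℝ) := by
        have : q + 1 ≤ i := by omega
        exact_mod_cast this
      nlinarith [hγ0 i]
  have hkey2 : (q : ℝ) * (G.cycleSet.ncard : ℝ)
      ≤ ∑ i ∈ Finset.Icc 3 M, ((i : ℝ) - 1) * ((G.cycleSetLen i).ncard : ℝ)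
      + ∑ i ∈ Finset.Icc 3 M, F i := by
    rw [hFA, Finset.mul_sum, ← Finset.sum_add_distrib]
    exact Finset.sum_le_sum hterm
  have hsub : ∑ i ∈ Finset.Icc 3 M, ((i : ℝ) - 1) * ((G.cycleSetLen i).ncard : ℝ)
      = ∑ i ∈ Finset.Icc 3 M, (i : ℝ) * ((G.cycleSetLen i).ncard : ℝ)
      - ∑ i ∈ Finset.Icc 3 M, ((G.cycleSetLen i).ncard : ℝ) := by
    rw [← Finset.sum_sub_distrib]
    exact Finset.sum_congr rfl fun i _ => by ring
  rw [e1, e2]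
  have h5 : (q : ℝ) * (G.cycleSet.ncard : ℝ)
      ≤ ((Fintype.card V : ℝ) - (Nat.card G.ConnectedComponent : ℝ))
        + ∑ i ∈ Finset.Icc 3 M, F i := by
    rw [hsub] at hkey2
    have hc' := hFA.symm
    linarith
  have h6 : (G.edgeSet.ncard : ℝ) ≤ (Fintype.card V : ℝ)
      - (Nat.card G.ConnectedComponent : ℝ) + (G.cycleSet.ncard : ℝ) := by linarith
  nlinarith [mul_le_mul_of_nonneg_right h6 hq0.le, h5]
end

section
/- Let q ≥ 2 be an integer and let F be a finite simple forest of cacti with exactly k connected components. For each integer i let γ_i(F) denote the number of cycles of length i in F, and let γ_{>q}(F) denote the number of cycles of F of length strictly greater than q. Then γ_{>q}(F) ≤ (1/q)·(|F| − k − Σ_{i=3}^{q} (i−1)·γ_i(F)), where |F| is the number of vertices of F. -/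
open SimpleGraph

variable {V : Type*}

/-- The cycles of `G` of length strictly greater than `q`, identified with their edge sets. -/
def SimpleGraph.cycleSetGT (G : SimpleGraph V) (q : ℕ) : Set (Set (Sym2 V)) :=
  {s | ∃ (v : V) (w : G.Walk v v), w.IsCycle ∧ q < w.length ∧ s = {e | e ∈ w.edges}}


/-! ### Auxiliary lemmas -/

namespace SimpleGraph.Walk

variable {G : SimpleGraph V}

theorem eq_of_edges_eq' {u v : V} (p : G.Walk u v) :
    ∀ q : G.Walk u v, p.edges = q.edges → p = q := by
  induction p with
  | nil =>
    intro q h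
    cases q with
    | nil => rfl
    | cons h' p' => simp at h
  | cons hadj p ih =>
    intro q h
    cases q with
    | nil => simp at h
    | cons hadj' q' =>
      simp only [edges_cons, List.cons_eq_cons] at h
      obtain ⟨he, hrest⟩ := h
      rw [Sym2.eq_iff] at he
      rcases he with ⟨-, h⟩ | ⟨h1, h2⟩
      · subst h
        rw [ih q' hrest]
      · rw [h2] at hadj
        exact absurd hadj G.irrefl

theorem transfer_injective {H : SimpleGraph V} {u v : V} (p q : G.Walk u v)
    (hp : ∀ e ∈ p.edges, e ∈ H.edgeSet) (hq : ∀ e ∈ q.edges, e ∈ H.edgeSet)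
    (h : p.transfer H hp = q.transfer H hq) : p = q := by
  apply eq_of_edges_eq'
  have := congrArg Walk.edges h
  rwa [edges_transfer, edges_transfer] at this

lemma mem_support_iff_mem_tail {a z : V} {c : G.Walk a a} (h : ¬c.Nil) :
    z ∈ c.support ↔ z ∈ c.support.tail := by
  constructor
  · intro hz
    rw [support_eq_cons c, List.mem_cons] at hz
    rcases hz with rfl | hz
    · rw [← support_tail_of_not_nil c h]; exact end_mem_support _
    · exact hz
  · intro hz
    rw [support_eq_cons c]
    exact List.mem_cons_of_mem _ hz

variable [DecidableEq V]

lemma mem_support_rotate {v x z : V} {w : G.Walk v v} (hw : w.IsCycle) (hx : x ∈ w.support) :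
    z ∈ (w.rotate x hx).support ↔ z ∈ w.support := by
  rw [mem_support_iff_mem_tail (hw.rotate hx).not_nil, mem_support_iff_mem_tail hw.not_nil]
  exact (w.support_rotate x hx).mem_iff

lemma cycle_split {x y : V} {c : G.Walk x x} (hc : c.IsCycle) (hy : y ∈ c.support)
    (hxy : y ≠ x) :
    ∃ (p q : G.Walk x y), p.IsPath ∧ q.IsPath ∧
      (∀ z, z ∈ p.support → z ∈ q.support → z = x ∨ z = y) ∧
      (∀ e, e ∈ c.edges ↔ e ∈ p.edges ∨ e ∈ q.edges) ∧
      (∀ e, e ∈ p.edges → e ∉ q.edges) ∧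
      p ≠ q ∧ 1 ≤ p.length ∧ 1 ≤ q.length ∧
      (∀ z ∈ p.support, z ∈ c.support) ∧ (∀ z ∈ q.support, z ∈ c.support) := by
  set t := c.takeUntil y hy with ht
  set d := c.dropUntil y hy with hd
  have hspec : t.append d = c := c.take_spec hy
  have hsupp : t.support ++ d.support.tail = c.support := by
    rw [← support_append, hspec]
  have htail : t.support.tail ++ d.support.tail = c.support.tail := by
    have h1 := hsupp
    rw [support_eq_cons t, support_eq_cons c, List.cons_append, List.cons.injEq] at h1
    exact h1.2
  have hnodup : (t.support.tail ++ d.support.tail).Nodup := by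
    rw [htail]; exact hc.support_nodup
  rw [List.nodup_append] at hnodup
  obtain ⟨hA, hB, hAB⟩ := hnodup
  have hxB : x ∈ d.support.tail := by
    have := d.end_mem_support
    rw [support_eq_cons d, List.mem_cons] at this
    rcases this with h | h
    · exact absurd h.symm hxy
    · exact h
  have hyA : y ∈ t.support.tail := by
    have := t.end_mem_support
    rw [support_eq_cons t, List.mem_cons] at this
    rcases this with h | h
    · exact absurd h hxy
    · exact h
  have htp : t.IsPath := by
    rw [isPath_def, support_eq_cons t, List.nodup_cons]
    exact ⟨fun hxA => hAB _ hxA _ hxB rfl, hA⟩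
  have hdp : d.IsPath := by
    rw [isPath_def, support_eq_cons d, List.nodup_cons]
    exact ⟨fun hyB => hAB _ hyA _ hyB rfl, hB⟩
  have hedges : t.edges ++ d.edges = c.edges := by
    rw [← edges_append, hspec]
  have hcen : c.edges.Nodup := hc.edges_nodup
  rw [← hedges, List.nodup_append] at hcen
  obtain ⟨-, -, hED⟩ := hcen
  have htlen : 1 ≤ t.length := by
    rcases Nat.eq_zero_or_pos t.length with h | h
    · exact absurd (nil_iff_length_eq.mpr h) (not_nil_of_ne (Ne.symm hxy))
    · exact h
  have hdlen : 1 ≤ d.reverse.length := by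
    rw [length_reverse]
    rcases Nat.eq_zero_or_pos d.length with h | h
    · exact absurd (nil_iff_length_eq.mpr h) (not_nil_of_ne hxy)
    · exact h
  refine ⟨t, d.reverse, htp, hdp.reverse, ?_, ?_, ?_, ?_, htlen, hdlen, ?_, ?_⟩
  · intro z hzt hzq
    rw [support_reverse, List.mem_reverse] at hzq
    rw [support_eq_cons t, List.mem_cons] at hzt
    rw [support_eq_cons d, List.mem_cons] at hzq
    rcases hzt with rfl | hzA
    · exact Or.inl rfl
    · rcases hzq with rfl | hzB
      · exact Or.inr rfl
      · exact absurd rfl (hAB _ hzA _ hzB)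
  · intro e
    rw [← hedges, List.mem_append, edges_reverse, List.mem_reverse]
  · intro e het heq
    rw [edges_reverse, List.mem_reverse] at heq
    exact hED _ het _ heq rfl
  · intro h
    have he : t.edges = [] := by
      by_contra hne
      obtain ⟨e, he⟩ := List.exists_mem_of_ne_nil _ hne
      have : e ∈ d.reverse.edges := h ▸ he
      rw [edges_reverse, List.mem_reverse] at this
      exact hED _ he _ this rfl
    have : t.length = 0 := by
      have := congrArg List.length he
      simpa [length_edges] using this
    omega
  · intro z hz
    exact c.support_takeUntil_subset hy hz
  · intro z hz
    rw [support_reverse, List.mem_reverse] at hz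
    exact c.support_dropUntil_subset hy hz

end SimpleGraph.Walk

section NoEar

open SimpleGraph.Walk

variable [DecidableEq V] {G : SimpleGraph V}

lemma exists_mem_edges_of_one_le_length {x y : V} {p : G.Walk x y} (h : 1 ≤ p.length) :
    ∃ e, e ∈ p.edges := by
  apply List.exists_mem_of_ne_nil
  intro hnil
  have := congrArg List.length hnil
  rw [length_edges] at this
  simp only [List.length_nil] at this
  omega

lemma no_ear (hG : IsEmpty G.Diamond) {v x y : V} {w : G.Walk v v} (hw : w.IsCycle)
    (hx : x ∈ w.support) (hy : y ∈ w.support) (hxy : x ≠ y)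
    {Q : G.Walk x y} (hQ : Q.IsPath)
    (hQs : ∀ z ∈ Q.support, z ∈ w.support → z = x ∨ z = y)
    (hQe : ∀ e ∈ Q.edges, e ∉ w.edges) : False := by
  set c := w.rotate x hx with hc
  have hcc : c.IsCycle := hw.rotate hx
  have hsuppc : ∀ z, z ∈ c.support ↔ z ∈ w.support := fun z => mem_support_rotate hw hx
  have hedgec : ∀ e, e ∈ c.edges ↔ e ∈ w.edges := fun e => (w.rotate_edges x hx).mem_iff
  obtain ⟨p, q, hp, hq, hdisj, hiff, hpq, hne, hplen, hqlen, hps, hqs⟩ :=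
    cycle_split hcc ((hsuppc y).mpr hy) (Ne.symm hxy)
  have hpQ : p ≠ Q := by
    intro h
    obtain ⟨e, he⟩ := exists_mem_edges_of_one_le_length hplen
    have h1 : e ∈ w.edges := (hedgec e).mp ((hiff e).mpr (Or.inl he))
    exact hQe e (h ▸ he) h1
  have hqQ : q ≠ Q := by
    intro h
    obtain ⟨e, he⟩ := exists_mem_edges_of_one_le_length hqlen
    have h1 : e ∈ w.edges := (hedgec e).mp ((hiff e).mpr (Or.inr he))
    exact hQe e (h ▸ he) h1
  exact hG.false ⟨x, y, hxy, p, q, Q, hp, hq, hQ, hne, hpQ, hqQ, hdisj,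
    fun z hzp hzQ => hQs z hzQ ((hsuppc z).mp (hps z hzp)),
    fun z hzq hzQ => hQs z hzQ ((hsuppc z).mp (hqs z hzq))⟩

end NoEar


section MainLemmas

open SimpleGraph.Walk

variable [DecidableEq V] {G : SimpleGraph V}

lemma no_offcycle_path (hG : IsEmpty G.Diamond) {v : V} {w : G.Walk v v} (hw : w.IsCycle) :
    ∀ (n : ℕ) {x y : V} (P : G.Walk x y), P.length ≤ n → P.IsPath → x ≠ y →
      x ∈ w.support → y ∈ w.support → (∀ e ∈ P.edges, e ∉ w.edges) → False := by
  intro n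
  induction n using Nat.strong_induction_on with
  | _ n ih =>
    intro x y P hlen hP hxy hx hy hPe
    by_cases hint : ∀ z ∈ P.support, z ∈ w.support → z = x ∨ z = y
    · exact no_ear hG hw hx hy hxy hP hint hPe
    · push_neg at hint
      obtain ⟨z, hzP, hzw, hzx, hzy⟩ := hint
      have h1 : (P.takeUntil z hzP).length < P.length := by
        have hspec := congrArg Walk.length (P.take_spec hzP)
        rw [length_append] at hspec
        have hd : 1 ≤ (P.dropUntil z hzP).length := by
          rcases Nat.eq_zero_or_pos (P.dropUntil z hzP).length with h | h
          · exact absurd (nil_iff_length_eq.mpr h) (not_nil_of_ne hzy)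
          · exact h
        omega
      exact ih (P.takeUntil z hzP).length (by omega) (P.takeUntil z hzP) le_rfl
        (hP.takeUntil hzP) (fun h => hzx h.symm) hx hzw
        (fun e he => hPe e (P.edges_takeUntil_subset hzP he))

lemma edges_eq_singleton_of_mem {x y : V} {P : G.Walk x y} (hP : P.IsPath)
    (he : s(x, y) ∈ P.edges) : P.edges = [s(x, y)] := by
  cases P with
  | nil => simp at he
  | cons hadj P' =>
    rw [edges_cons, List.mem_cons] at he
    rcases he with he | he
    · rw [Sym2.eq_iff] at he
      rcases he with ⟨-, hc⟩ | ⟨hc, -⟩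
      · subst hc
        have : P' = Walk.nil := by
          have := hP.of_cons
          rwa [isPath_iff_eq_nil] at this
        subst this
        simp
      · rw [← hc] at hadj
        exact absurd hadj G.irrefl
    · exfalso
      have hx : x ∈ P'.support := P'.fst_mem_support_of_mem_edges he
      rw [cons_isPath_iff] at hP
      exact hP.2 hx

lemma path_edges_subset_cycle (hG : IsEmpty G.Diamond) {v : V} {w : G.Walk v v}
    (hw : w.IsCycle) :
    ∀ (n : ℕ) {x y : V} (P : G.Walk x y), P.length ≤ n → P.IsPath →
      x ∈ w.support → y ∈ w.support → ∀ e ∈ P.edges, e ∈ w.edges := by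
  intro n
  induction n using Nat.strong_induction_on with
  | _ n ih =>
    intro x y P hlen hP hx hy
    by_cases hxy : x = y
    · subst hxy
      have : P = Walk.nil := by rwa [isPath_iff_eq_nil] at hP
      subst this
      intro e he
      simp at he
    by_cases hdisj : ∀ e ∈ P.edges, e ∉ w.edges
    · exact (no_offcycle_path hG hw n P hlen hP hxy hx hy hdisj).elim
    push_neg at hdisj
    obtain ⟨e₀, he₀P, he₀w⟩ := hdisj
    obtain ⟨⟨a, b⟩, rfl⟩ := e₀.exists_rep
    have haw : a ∈ w.support := w.fst_mem_support_of_mem_edges he₀w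
    have hbw : b ∈ w.support := w.snd_mem_support_of_mem_edges he₀w
    have haP : a ∈ P.support := P.fst_mem_support_of_mem_edges he₀P
    have hbP : b ∈ P.support := P.snd_mem_support_of_mem_edges he₀P
    have hab : G.Adj a b := P.adj_of_mem_edges he₀P
    -- helper to split at an interior vertex
    have split : ∀ z : V, z ∈ P.support → z ∈ w.support → z ≠ x → z ≠ y →
        ∀ e ∈ P.edges, e ∈ w.edges := by
      intro z hzP hzw hzx hzy e he
      have hspec := congrArg Walk.length (P.take_spec hzP)
      rw [length_append] at hspec
      have hd1 : 1 ≤ (P.dropUntil z hzP).length := by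
        rcases Nat.eq_zero_or_pos (P.dropUntil z hzP).length with h | h
        · exact absurd (nil_iff_length_eq.mpr h) (not_nil_of_ne hzy)
        · exact h
      have ht1 : 1 ≤ (P.takeUntil z hzP).length := by
        rcases Nat.eq_zero_or_pos (P.takeUntil z hzP).length with h | h
        · exact absurd (nil_iff_length_eq.mpr h) (not_nil_of_ne (fun hh => hzx hh.symm))
        · exact h
      have hePsplit : e ∈ (P.takeUntil z hzP).edges ∨ e ∈ (P.dropUntil z hzP).edges := by
        have := congrArg Walk.edges (P.take_spec hzP)
        rw [edges_append] at this
        rw [← this, List.mem_append] at he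
        exact he
      rcases hePsplit with h | h
      · exact ih (P.takeUntil z hzP).length (by omega) (P.takeUntil z hzP) le_rfl
          (hP.takeUntil hzP) hx hzw e h
      · exact ih (P.dropUntil z hzP).length (by omega) (P.dropUntil z hzP) le_rfl
          (hP.dropUntil hzP) hzw hy e h
    by_cases hax : a ≠ x
    · by_cases hay : a ≠ y
      · exact split a haP haw hax hay
      · push_neg at hay
        by_cases hbx : b ≠ x
        · by_cases hby : b ≠ y
          · exact split b hbP hbw hbx hby
          · push_neg at hby
            exact absurd (hby ▸ hay ▸ rfl : a = b) hab.ne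
        · push_neg at hbx
          -- here a = y, b = x : s(a,b) = s(x,y)
          have hxy' : s(a, b) = s(x, y) := by rw [hay, hbx, Sym2.eq_swap]
          have hedges := edges_eq_singleton_of_mem hP (hxy' ▸ he₀P)
          intro e he
          rw [hedges, List.mem_cons] at he
          rcases he with rfl | he
          · exact hxy' ▸ he₀w
          · simp at he
    · push_neg at hax
      by_cases hby : b ≠ y
      · by_cases hbx : b ≠ x
        · exact split b hbP hbw hbx hby
        · push_neg at hbx
          exact absurd (hbx ▸ hax ▸ rfl : a = b) hab.ne
      · push_neg at hby
        have hxy' : s(a, b) = s(x, y) := by rw [hax, hby]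
        have hedges := edges_eq_singleton_of_mem hP (hxy' ▸ he₀P)
        intro e he
        rw [hedges, List.mem_cons] at he
        rcases he with rfl | he
        · exact hxy' ▸ he₀w
        · simp at he

end MainLemmas


section EdgeDisjoint

open SimpleGraph.Walk

variable [DecidableEq V] {G : SimpleGraph V}

/-- Splitting a cycle at the source of a dart whose edge is `e`. -/
lemma cycle_cons_of_dart {a : V} {c : G.Walk a a} (hc : c.IsCycle) {D : G.Dart}
    (hD : D ∈ c.darts) (hfst : D.toProd.1 = a) :
    ∃ (m : V) (hadj : G.Adj a m) (t : G.Walk m a), t.IsPath ∧ D.edge = s(a, m) ∧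
      (∀ f, f ∈ c.edges ↔ f = s(a, m) ∨ f ∈ t.edges) := by
  cases c with
  | nil => exact absurd rfl hc.ne_nil
  | cons hadj t =>
    rename_i m
    have htp : t.IsPath := ((Walk.cons_isCycle_iff t hadj).mp hc).1
    rw [darts_cons, List.mem_cons] at hD
    rcases hD with rfl | hD
    · refine ⟨m, hadj, t, htp, ?_, ?_⟩
      · rfl
      · intro f
        rw [edges_cons, List.mem_cons]
    · exfalso
      have hsym : D.symm ∈ t.reverse.darts := by
        rw [mem_darts_reverse, Dart.symm_symm]
        exact hD
      have ha : a ∈ t.reverse.support.tail := by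
        have : D.symm.toProd.2 ∈ t.reverse.darts.map (·.snd) := List.mem_map_of_mem hsym
        rw [map_snd_darts] at this
        rw [Dart.symm_toProd, Prod.snd_swap, hfst] at this
        exact this
      have hrp : t.reverse.IsPath := htp.reverse
      rw [isPath_def, support_eq_cons t.reverse, List.nodup_cons] at hrp
      exact hrp.1 ha

lemma exists_dart_of_mem_edges {u v : V} (p : G.Walk u v) {e : Sym2 V} (he : e ∈ p.edges) :
    ∃ d ∈ p.darts, d.edge = e :=
  List.mem_map.mp he

/-- Two cycles sharing an edge have the same edge sets (in a diamond-free graph). -/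
lemma cycle_edges_subset_of_shared (hG : IsEmpty G.Diamond) {v₁ v₂ : V}
    {w₁ : G.Walk v₁ v₁} {w₂ : G.Walk v₂ v₂} (h₁ : w₁.IsCycle) (h₂ : w₂.IsCycle)
    {e : Sym2 V} (he₁ : e ∈ w₁.edges) (he₂ : e ∈ w₂.edges) :
    ∀ f ∈ w₂.edges, f ∈ w₁.edges := by
  obtain ⟨D, hD, rfl⟩ := exists_dart_of_mem_edges w₂ he₂
  set a := D.toProd.1 with ha
  have haS : a ∈ w₂.support := w₂.dart_fst_mem_support_of_mem_darts hD
  set c := w₂.rotate a haS with hcdef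
  have hcc : c.IsCycle := h₂.rotate haS
  have hDc : D ∈ c.darts := by
    rw [(w₂.rotate_darts a haS).mem_iff]
    exact hD
  obtain ⟨m, hadj, t, htp, hedge, hiff⟩ := cycle_cons_of_dart hcc hDc rfl
  have hedgec : ∀ f, f ∈ c.edges ↔ f ∈ w₂.edges := fun f => (w₂.rotate_edges a haS).mem_iff
  -- endpoints of e in w₁.support
  have he₁' : s(a, m) ∈ w₁.edges := hedge ▸ he₁
  have haw : a ∈ w₁.support := w₁.fst_mem_support_of_mem_edges he₁'
  have hmw : m ∈ w₁.support := w₁.snd_mem_support_of_mem_edges he₁'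
  have htsub : ∀ f ∈ t.edges, f ∈ w₁.edges :=
    path_edges_subset_cycle hG h₁ t.length t le_rfl htp hmw haw
  intro f hf
  rw [← hedgec f, hiff f] at hf
  rcases hf with rfl | hf
  · exact he₁'
  · exact htsub f hf

end EdgeDisjoint


section Components

open SimpleGraph.Walk

variable [DecidableEq V] {G : SimpleGraph V}

lemma reachable_delete_of_walk {v : V} (w : G.Walk v v) {x y : V} (P : G.Walk x y) :
    (G.deleteEdges {e | e ∈ w.edges}).Reachable x y ∨
      ∃ s ∈ w.support, (G.deleteEdges {e | e ∈ w.edges}).Reachable x s := by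
  induction P with
  | nil => exact Or.inl (Reachable.refl _)
  | cons hadj P ih =>
    rename_i a c d
    by_cases hm : s(a, c) ∈ w.edges
    · exact Or.inr ⟨a, w.fst_mem_support_of_mem_edges hm, Reachable.refl _⟩
    · have hadj' : (G.deleteEdges {e | e ∈ w.edges}).Adj a c := by
        rw [deleteEdges_adj]
        exact ⟨hadj, hm⟩
      rcases ih with h | ⟨s, hs, hr⟩
      · exact Or.inl (hadj'.reachable.trans h)
      · exact Or.inr ⟨s, hs, hadj'.reachable.trans hr⟩

lemma not_reachable_delete (hG : IsEmpty G.Diamond) {v : V} {w : G.Walk v v} (hw : w.IsCycle)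
    {x y : V} (hx : x ∈ w.support) (hy : y ∈ w.support) (hxy : x ≠ y) :
    ¬ (G.deleteEdges {e | e ∈ w.edges}).Reachable x y := by
  intro hr
  obtain ⟨P⟩ := hr
  obtain ⟨Q, hQ⟩ := P.toPath
  have hsub : ∀ e ∈ Q.edges, e ∈ G.edgeSet ∧ e ∉ {e' : Sym2 V | e' ∈ w.edges} := by
    intro e he
    have := Q.edges_subset_edgeSet he
    rwa [edgeSet_deleteEdges, Set.mem_diff] at this
  set Q' := Q.transfer G (fun e he => (hsub e he).1) with hQ'def
  have hQ'p : Q'.IsPath := hQ.transfer _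
  have hQ'e : ∀ e ∈ Q'.edges, e ∉ w.edges := by
    intro e he
    rw [hQ'def, edges_transfer] at he
    exact (hsub e he).2
  exact no_offcycle_path hG hw Q'.length Q' le_rfl hQ'p hxy hx hy hQ'e

lemma mem_support_reachable {v z : V} (w : G.Walk v v) (hz : z ∈ w.support) :
    G.Reachable z v :=
  ⟨(w.takeUntil z hz).reverse⟩

lemma card_connectedComponent_delete [Fintype V] (hG : IsEmpty G.Diamond) {v : V}
    {w : G.Walk v v} (hw : w.IsCycle) :
    Nat.card (G.deleteEdges {e | e ∈ w.edges}).ConnectedComponent + 1 =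
      Nat.card G.ConnectedComponent + w.length := by
  classical
  set G' := G.deleteEdges {e | e ∈ w.edges} with hG'def
  letI : Fintype G.ConnectedComponent := Fintype.ofFinite _
  letI : Fintype G'.ConnectedComponent := Fintype.ofFinite _
  set π : G'.ConnectedComponent → G.ConnectedComponent :=
    ConnectedComponent.map (Hom.ofLE (deleteEdges_le _)) with hπdef
  have hπmk : ∀ z : V, π (G'.connectedComponentMk z) = G.connectedComponentMk z := by
    intro z
    rw [hπdef, ConnectedComponent.map_mk]
    rfl
  set C₀ : G.ConnectedComponent := G.connectedComponentMk v with hC₀def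
  have hsuppC₀ : ∀ z ∈ w.support, G.connectedComponentMk z = C₀ :=
    fun z hz => ConnectedComponent.sound (mem_support_reachable w hz)
  -- the fiber over C₀
  have hfiber₀ : (Finset.univ.filter (fun c => π c = C₀)) =
      w.support.toFinset.image (fun z => G'.connectedComponentMk z) := by
    ext c
    simp only [Finset.mem_filter, Finset.mem_univ, true_and, Finset.mem_image,
      List.mem_toFinset]
    constructor
    · intro hc
      obtain ⟨x, rfl⟩ : ∃ x, G'.connectedComponentMk x = c := Quot.exists_rep c
      rw [hπmk x] at hc
      have hreach : G.Reachable x v := ConnectedComponent.eq.mp hc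
      obtain ⟨P⟩ := hreach
      rcases reachable_delete_of_walk w P with h | ⟨s, hs, hr⟩
      · exact ⟨v, w.start_mem_support, (ConnectedComponent.sound h).symm⟩
      · exact ⟨s, hs, (ConnectedComponent.sound hr).symm⟩
    · rintro ⟨z, hz, rfl⟩
      rw [hπmk z]
      exact hsuppC₀ z hz
  have hinj : Set.InjOn (fun z => G'.connectedComponentMk z) ↑w.support.toFinset := by
    intro z₁ h₁ z₂ h₂ hmk
    rw [Finset.mem_coe, List.mem_toFinset] at h₁ h₂
    by_contra hne
    exact not_reachable_delete hG hw h₁ h₂ hne (ConnectedComponent.eq.mp hmk)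
  have hcard₀ : (Finset.univ.filter (fun c => π c = C₀)).card = w.length := by
    rw [hfiber₀, Finset.card_image_of_injOn hinj]
    have h1 : w.support.toFinset = w.support.tail.toFinset := by
      conv_lhs => rw [support_eq_cons w]
      rw [List.toFinset_cons, Finset.insert_eq_self, List.mem_toFinset]
      rw [← support_tail_of_not_nil w hw.not_nil]
      exact end_mem_support _
    rw [h1, List.toFinset_card_of_nodup hw.support_nodup, List.length_tail,
      length_support]
    simp
  have hcard₁ : ∀ C : G.ConnectedComponent, C ≠ C₀ →
      (Finset.univ.filter (fun c => π c = C)).card = 1 := by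
    intro C hC
    rw [Finset.card_eq_one]
    obtain ⟨x, rfl⟩ : ∃ x, G.connectedComponentMk x = C := Quot.exists_rep C
    refine ⟨G'.connectedComponentMk x, ?_⟩
    ext c
    simp only [Finset.mem_filter, Finset.mem_univ, true_and, Finset.mem_singleton]
    constructor
    · intro hc
      obtain ⟨y, rfl⟩ : ∃ y, G'.connectedComponentMk y = c := Quot.exists_rep c
      rw [hπmk y] at hc
      obtain ⟨P⟩ := ConnectedComponent.eq.mp hc
      rcases reachable_delete_of_walk w P with h | ⟨s, hs, hr⟩
      · exact ConnectedComponent.sound h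
      · exfalso
        apply hC
        rw [← hc]
        calc G.connectedComponentMk y = G.connectedComponentMk s := by
              have : G.Reachable y s := (hr.mono (deleteEdges_le _))
              exact ConnectedComponent.sound this
          _ = C₀ := hsuppC₀ s hs
    · rintro rfl
      exact hπmk x
  -- now count
  have hsum : Fintype.card G'.ConnectedComponent =
      ∑ C : G.ConnectedComponent, (Finset.univ.filter (fun c => π c = C)).card := by
    rw [← Finset.card_univ]
    exact Finset.card_eq_sum_card_fiberwise (fun c _ => Finset.mem_univ (π c))
  have hC₀mem : C₀ ∈ (Finset.univ : Finset G.ConnectedComponent) := Finset.mem_univ _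
  rw [← Finset.add_sum_erase _ _ hC₀mem] at hsum
  have herase : ∑ C ∈ Finset.univ.erase C₀, (Finset.univ.filter (fun c => π c = C)).card =
      (Finset.univ.erase C₀).card := by
    rw [Finset.sum_congr rfl (fun C hC => hcard₁ C (Finset.mem_erase.mp hC).1)]
    simp
  rw [herase, hcard₀, Finset.card_erase_of_mem hC₀mem, Finset.card_univ] at hsum
  rw [Nat.card_eq_fintype_card, Nat.card_eq_fintype_card, hsum]
  have hpos : 1 ≤ Fintype.card G.ConnectedComponent :=
    Fintype.card_pos_iff.mpr ⟨C₀⟩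
  omega

end Components


section CycleSets

open SimpleGraph.Walk

variable {G : SimpleGraph V}

lemma diamond_free_delete (hG : IsEmpty G.Diamond) (s : Set (Sym2 V)) :
    IsEmpty (G.deleteEdges s).Diamond := by
  constructor
  intro D
  have htr : ∀ {x y : V} (p : (G.deleteEdges s).Walk x y), ∀ e ∈ p.edges, e ∈ G.edgeSet :=
    fun p e he => edgeSet_mono (deleteEdges_le s) (p.edges_subset_edgeSet he)
  refine hG.false ⟨D.u, D.v, D.ne, D.p₁.transfer G (htr D.p₁), D.p₂.transfer G (htr D.p₂),
    D.p₃.transfer G (htr D.p₃), D.h₁.transfer _, D.h₂.transfer _, D.h₃.transfer _,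
    ?_, ?_, ?_, ?_, ?_, ?_⟩
  · exact fun h => D.ne₁₂ (transfer_injective _ _ _ _ h)
  · exact fun h => D.ne₁₃ (transfer_injective _ _ _ _ h)
  · exact fun h => D.ne₂₃ (transfer_injective _ _ _ _ h)
  · intro x hx hy
    rw [support_transfer] at hx hy
    exact D.disj₁₂ x hx hy
  · intro x hx hy
    rw [support_transfer] at hx hy
    exact D.disj₁₃ x hx hy
  · intro x hx hy
    rw [support_transfer] at hx hy
    exact D.disj₂₃ x hx hy

lemma ncard_edgeSetOf [DecidableEq V] {v : V} {w : G.Walk v v} (hw : w.IsCycle) :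
    ({e | e ∈ w.edges} : Set (Sym2 V)).ncard = w.length := by
  have h1 : ({e | e ∈ w.edges} : Set (Sym2 V)) = ↑w.edges.toFinset := by
    ext e
    simp
  rw [h1, Set.ncard_coe_finset, List.toFinset_card_of_nodup hw.edges_nodup, length_edges]

lemma cycleSet_delete [DecidableEq V] (hG : IsEmpty G.Diamond) {v : V} {w : G.Walk v v}
    (hw : w.IsCycle) :
    (G.deleteEdges {e | e ∈ w.edges}).cycleSet =
      G.cycleSet \ {({e | e ∈ w.edges} : Set (Sym2 V))} := by
  set Ew : Set (Sym2 V) := {e | e ∈ w.edges} with hEw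
  ext s
  constructor
  · rintro ⟨v', w', hw', rfl⟩
    have htr : ∀ e ∈ w'.edges, e ∈ G.edgeSet :=
      fun e he => edgeSet_mono (deleteEdges_le Ew) (w'.edges_subset_edgeSet he)
    refine ⟨⟨v', w'.transfer G htr, hw'.transfer htr, by rw [edges_transfer]⟩, ?_⟩
    -- not equal to Ew
    intro hmem
    rw [Set.mem_singleton_iff] at hmem
    obtain ⟨e₀, he₀⟩ := exists_mem_edges_of_one_le_length
      (le_trans (by norm_num) hw'.three_le_length)
    have h1 : e₀ ∈ Ew := by
      rw [← hmem]
      exact he₀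
    have h2 := w'.edges_subset_edgeSet he₀
    rw [edgeSet_deleteEdges] at h2
    exact h2.2 h1
  · rintro ⟨⟨v₂, w₂, hw₂, rfl⟩, hne⟩
    rw [Set.mem_singleton_iff] at hne
    have hdisj : ∀ e ∈ w₂.edges, e ∉ w.edges := by
      intro e he hew
      apply hne
      ext f
      constructor
      · intro hf
        exact cycle_edges_subset_of_shared hG hw hw₂ hew he f hf
      · intro hf
        exact cycle_edges_subset_of_shared hG hw₂ hw he hew f hf
    have htr : ∀ e ∈ w₂.edges, e ∈ (G.deleteEdges Ew).edgeSet := by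
      intro e he
      rw [edgeSet_deleteEdges]
      exact ⟨w₂.edges_subset_edgeSet he, hdisj e he⟩
    exact ⟨v₂, w₂.transfer _ htr, hw₂.transfer htr, by rw [edges_transfer]⟩

lemma core_bound [Fintype V] [DecidableEq V] :
    ∀ (m : ℕ) (G : SimpleGraph V), G.edgeSet.ncard ≤ m → IsEmpty G.Diamond →
      (∑ s ∈ (G.cycleSet).toFinite.toFinset, (s.ncard - 1)) + Nat.card G.ConnectedComponent
        ≤ Fintype.card V := by
  intro m
  induction m using Nat.strong_induction_on with
  | _ m ih =>
    intro G hm hG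
    classical
    rcases Set.eq_empty_or_nonempty G.cycleSet with hempty | ⟨s, hs⟩
    · have h0 : ∑ s ∈ (G.cycleSet).toFinite.toFinset, (s.ncard - 1) = 0 :=
        Finset.sum_eq_zero (fun s hs => by
          rw [Set.Finite.mem_toFinset, hempty] at hs
          exact absurd hs (Set.notMem_empty _))
      rw [h0, zero_add, ← Nat.card_eq_fintype_card]
      exact Nat.card_le_card_of_surjective _ (Quot.mk_surjective)
    · obtain ⟨v, w, hw, rfl⟩ := hs
      set Ew : Set (Sym2 V) := {e | e ∈ w.edges} with hEwdef
      set G' := G.deleteEdges Ew with hG'def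
      have hG' : IsEmpty G'.Diamond := diamond_free_delete hG Ew
      have hsub : G'.edgeSet ⊂ G.edgeSet := by
        rw [hG'def, edgeSet_deleteEdges]
        rw [Set.ssubset_iff_of_subset Set.diff_subset]
        obtain ⟨e₀, he₀⟩ := exists_mem_edges_of_one_le_length
          (le_trans (by norm_num) hw.three_le_length)
        exact ⟨e₀, w.edges_subset_edgeSet he₀, fun h => h.2 he₀⟩
      have hmeas : G'.edgeSet.ncard < m :=
        lt_of_lt_of_le (Set.ncard_lt_ncard hsub G.edgeSet.toFinite) hm
      have IH := ih G'.edgeSet.ncard hmeas G' le_rfl hG'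
      have hcs : G'.cycleSet = G.cycleSet \ {Ew} := cycleSet_delete hG hw
      have hEwmem : Ew ∈ G.cycleSet := ⟨v, w, hw, rfl⟩
      have hF' : (G'.cycleSet).toFinite.toFinset = (G.cycleSet).toFinite.toFinset.erase Ew := by
        ext t
        rw [Set.Finite.mem_toFinset, Finset.mem_erase, Set.Finite.mem_toFinset, hcs,
          Set.mem_diff, Set.mem_singleton_iff, and_comm]
      have hFmem : Ew ∈ (G.cycleSet).toFinite.toFinset := by
        rwa [Set.Finite.mem_toFinset]
      have hsum : ∑ s ∈ (G.cycleSet).toFinite.toFinset, (s.ncard - 1) =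
          (Ew.ncard - 1) + ∑ s ∈ (G'.cycleSet).toFinite.toFinset, (s.ncard - 1) := by
        rw [hF']
        exact (Finset.add_sum_erase _ (fun s => s.ncard - 1) hFmem).symm
      have hEcard : Ew.ncard = w.length := ncard_edgeSetOf hw
      have hcc : Nat.card G'.ConnectedComponent + 1 =
          Nat.card G.ConnectedComponent + w.length := card_connectedComponent_delete hG hw
      have h3 : 3 ≤ w.length := hw.three_le_length
      omega

end CycleSets

/-- In a finite simple forest of cacti with `k` components, the number of cycles of length
exceeding `q` satisfies `γ_{>q}(F) ≤ (1/q)·(|F| − k − Σ_{i=3}^{q} (i−1)·γ_i(F))`. -/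
theorem forest_of_cacti_long_cycles_bound (V : Type*) [Fintype V] [DecidableEq V]
    (G : SimpleGraph V) [DecidableRel G.Adj] (q : ℕ) (hq : 2 ≤ q)
    (hdiamondfree : IsEmpty G.Diamond)
    (k : ℕ) (hk : Nat.card G.ConnectedComponent = k) :
    ((G.cycleSetGT q).ncard : ℝ) ≤
      (1 / q) * ((Fintype.card V : ℝ) - k -
        ∑ i ∈ Finset.Icc 3 q, ((i : ℝ) - 1) * (G.cycleSetLen i).ncard) := by
  classical
  have hA : ∀ s ∈ G.cycleSet, 3 ≤ s.ncard := by
    rintro s ⟨v, w, hw, rfl⟩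
    rw [ncard_edgeSetOf hw]
    exact hw.three_le_length
  set F := (G.cycleSet).toFinite.toFinset with hFdef
  have hFmem : ∀ s, s ∈ F ↔ s ∈ G.cycleSet := fun s => Set.Finite.mem_toFinset _
  set Flt := F.filter (fun s => s.ncard ≤ q) with hFlt
  set Fgt := F.filter (fun s => ¬ s.ncard ≤ q) with hFgt
  have h1 : ∑ s ∈ F, (s.ncard - 1) = ∑ s ∈ Flt, (s.ncard - 1) + ∑ s ∈ Fgt, (s.ncard - 1) :=
    (Finset.sum_filter_add_sum_filter_not F _ _).symm
  have h2 : q * Fgt.card ≤ ∑ s ∈ Fgt, (s.ncard - 1) := by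
    rw [mul_comm, ← smul_eq_mul]
    apply Finset.card_nsmul_le_sum
    intro s hs
    rw [hFgt, Finset.mem_filter] at hs
    omega
  have hfilt_eq : ∀ i ∈ Finset.Icc 3 q, Flt.filter (fun s => s.ncard = i) =
      F.filter (fun s => s.ncard = i) := by
    intro i hi
    rw [Finset.mem_Icc] at hi
    rw [hFlt, Finset.filter_filter]
    apply Finset.filter_congr
    intro s hs
    constructor
    · rintro ⟨-, h⟩; exact h
    · intro h; exact ⟨by omega, h⟩
  have hmap : ∀ s ∈ Flt, s.ncard ∈ Finset.Icc 3 q := by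
    intro s hs
    rw [hFlt, Finset.mem_filter] at hs
    rw [Finset.mem_Icc]
    exact ⟨hA s ((hFmem s).mp hs.1), hs.2⟩
  have h3' := Finset.sum_fiberwise_of_maps_to hmap (fun s => s.ncard - 1)
  have h3 : ∑ s ∈ Flt, (s.ncard - 1) =
      ∑ i ∈ Finset.Icc 3 q, (i - 1) * (F.filter (fun s => s.ncard = i)).card := by
    rw [← h3']
    apply Finset.sum_congr rfl
    intro i hi
    rw [hfilt_eq i hi]
    rw [Finset.sum_congr rfl (fun s hs =>
      show s.ncard - 1 = i - 1 by rw [(Finset.mem_filter.mp hs).2])]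
    rw [Finset.sum_const, smul_eq_mul, mul_comm]
  have h4 : (G.cycleSetGT q).ncard = Fgt.card := by
    have : G.cycleSetGT q = ↑Fgt := by
      ext s
      rw [Finset.mem_coe, hFgt, Finset.mem_filter, hFmem]
      constructor
      · rintro ⟨v, w, hw, hlen, rfl⟩
        refine ⟨⟨v, w, hw, rfl⟩, ?_⟩
        rw [ncard_edgeSetOf hw]
        omega
      · rintro ⟨⟨v, w, hw, rfl⟩, hn⟩
        refine ⟨v, w, hw, ?_, rfl⟩
        rw [ncard_edgeSetOf hw] at hn
        omega
    rw [this, Set.ncard_coe_finset]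
  have h5 : ∀ i, (G.cycleSetLen i).ncard = (F.filter (fun s => s.ncard = i)).card := by
    intro i
    have : G.cycleSetLen i = ↑(F.filter (fun s => s.ncard = i)) := by
      ext s
      rw [Finset.mem_coe, Finset.mem_filter, hFmem]
      constructor
      · rintro ⟨v, w, hw, hlen, rfl⟩
        exact ⟨⟨v, w, hw, rfl⟩, by rw [ncard_edgeSetOf hw]; exact hlen⟩
      · rintro ⟨⟨v, w, hw, rfl⟩, hn⟩
        exact ⟨v, w, hw, by rw [ncard_edgeSetOf hw] at hn; exact hn, rfl⟩
    rw [this, Set.ncard_coe_finset]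
  have hcore : ∑ s ∈ F, (s.ncard - 1) + Nat.card G.ConnectedComponent ≤ Fintype.card V :=
    core_bound G.edgeSet.ncard G le_rfl hdiamondfree
  rw [hk] at hcore
  -- the natural number inequality
  have hnat : q * (G.cycleSetGT q).ncard +
      ∑ i ∈ Finset.Icc 3 q, (i - 1) * (G.cycleSetLen i).ncard + k ≤ Fintype.card V := by
    have hsum_eq : ∑ i ∈ Finset.Icc 3 q, (i - 1) * (G.cycleSetLen i).ncard =
        ∑ i ∈ Finset.Icc 3 q, (i - 1) * (F.filter (fun s => s.ncard = i)).card :=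
      Finset.sum_congr rfl (fun i _ => by rw [h5 i])
    rw [h4, hsum_eq]
    omega
  -- pass to the reals
  have hq0 : (0 : ℝ) < (q : ℝ) := by
    have : 0 < q := by omega
    exact_mod_cast this
  rw [one_div, inv_mul_eq_div, le_div_iff₀ hq0]
  have hcast : ((∑ i ∈ Finset.Icc 3 q, (i - 1) * (G.cycleSetLen i).ncard : ℕ) : ℝ) =
      ∑ i ∈ Finset.Icc 3 q, ((i : ℝ) - 1) * (G.cycleSetLen i).ncard := by
    rw [Nat.cast_sum]
    apply Finset.sum_congr rfl
    intro i hi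
    rw [Finset.mem_Icc] at hi
    rw [Nat.cast_mul, Nat.cast_sub (by omega : 1 ≤ i)]
    norm_num
  have hnat' : ((q * (G.cycleSetGT q).ncard +
      ∑ i ∈ Finset.Icc 3 q, (i - 1) * (G.cycleSetLen i).ncard + k : ℕ) : ℝ) ≤
      (Fintype.card V : ℝ) := by exact_mod_cast hnat
  rw [Nat.cast_add, Nat.cast_add, Nat.cast_mul, hcast] at hnat'
  linarith
end

section
/- Let H be a finite simple graph, let S be a subgraph of H in which every vertex of S has at least two neighbors within S, and let P be a path in H each of whose internal vertices has exactly two neighbors in H. If S contains some internal vertex of P, then S contains every vertex of P. -/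
open SimpleGraph

private lemma forward_prop {V : Type*} {H : SimpleGraph V} {S : H.Subgraph}
    {a b : V} (P : H.Walk a b) (hP : P.IsPath)
    (hF : ∀ x ∈ P.support, x ≠ b → x ∈ S.verts → ∀ y, H.Adj x y → y ∈ S.verts)
    (ha : a ∈ S.verts) : ∀ x ∈ P.support, x ∈ S.verts := by
  induction P with
  | nil => intro x hx; simp at hx; subst hx; exact ha
  | @cons u c w h p ih =>
    intro x hx
    rw [SimpleGraph.Walk.support_cons, List.mem_cons] at hx
    have hub : u ≠ w := by
      intro huw; subst huw
      exact ((SimpleGraph.Walk.cons_isPath_iff _ _).mp hP).2 p.end_mem_support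
    have hc : c ∈ S.verts :=
      hF u (SimpleGraph.Walk.start_mem_support _) hub ha c h
    rcases hx with rfl | hx
    · exact ha
    · exact ih ((SimpleGraph.Walk.cons_isPath_iff _ _).mp hP).1
        (fun y hy => hF y (by rw [SimpleGraph.Walk.support_cons]; exact List.mem_cons_of_mem _ hy))
        hc x hx

/-- Let `S` be a subgraph of a finite simple graph `H` in which every vertex of `S` has at
least two neighbours within `S`, and let `P` be a path in `H` each of whose internal vertices
has exactly two neighbours in `H`. If `S` contains an internal vertex of `P`, then `S`
contains every vertex of `P`. -/
theorem subgraph_contains_path_of_internal_vertex (V : Type*) [Fintype V]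
    (H : SimpleGraph V) (S : H.Subgraph)
    (hS : ∀ v ∈ S.verts, 2 ≤ (S.neighborSet v).ncard)
    (a b : V) (P : H.Walk a b) (hP : P.IsPath)
    (hint : ∀ x ∈ P.support, x ≠ a → x ≠ b → (H.neighborSet x).ncard = 2)
    (hmem : ∃ x ∈ P.support, x ≠ a ∧ x ≠ b ∧ x ∈ S.verts) :
    ∀ x ∈ P.support, x ∈ S.verts := by
  -- key pushing fact for internal vertices
  have key : ∀ x ∈ P.support, x ≠ a → x ≠ b → x ∈ S.verts →
      ∀ y, H.Adj x y → y ∈ S.verts := by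
    intro x hx hxa hxb hxS y hadj
    have h2 : (H.neighborSet x).ncard = 2 := hint x hx hxa hxb
    have hsub : S.neighborSet x ⊆ H.neighborSet x := S.neighborSet_subset x
    have hfin : (H.neighborSet x).Finite := Set.toFinite _
    have heq : S.neighborSet x = H.neighborSet x :=
      Set.eq_of_subset_of_ncard_le hsub (by rw [h2]; exact hS x hxS) hfin
    have : y ∈ S.neighborSet x := heq ▸ hadj
    exact this.snd_mem
  classical
  obtain ⟨x, hx, hxa, hxb, hxS⟩ := hmem
  -- split the walk at x
  set q := P.takeUntil x hx with hq
  set r := P.dropUntil x hx with hr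
  have hspec : q.append r = P := P.take_spec hx
  have hnd : (q.support ++ r.support.tail).Nodup := by
    have := hP.support_nodup
    rwa [← hspec, SimpleGraph.Walk.support_append] at this
  have hdisj := (List.nodup_append.mp hnd).2.2
  have hqsub : ∀ z ∈ q.support, z ∈ P.support := fun z hz =>
    SimpleGraph.Walk.support_takeUntil_subset P hx hz
  have hrsub : ∀ z ∈ r.support, z ∈ P.support := fun z hz =>
    SimpleGraph.Walk.support_dropUntil_subset P hx hz
  have hqpath : q.IsPath := hP.takeUntil hx
  have hrpath : r.IsPath := hP.dropUntil hx
  -- a is not in r.support.tail, b is not in q.support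
  have hbq : b ∉ q.support := by
    intro hb
    have hbr : b ∈ r.support.tail := by
      have : b ∈ r.support := r.end_mem_support
      rw [r.support_eq_cons] at this
      rcases this with _ | h
      · exact absurd rfl hxb
      · assumption
    exact hdisj _ hb _ hbr rfl
  have har : a ∉ r.support.tail := by
    intro ha
    exact hdisj _ (q.start_mem_support) _ ha rfl
  -- forward along r : Walk x b
  have hrall : ∀ z ∈ r.support, z ∈ S.verts := by
    apply forward_prop r hrpath _ hxS
    intro z hz hzb hzS y hadj
    have hza : z ≠ a := by
      rintro rfl
      rw [r.support_eq_cons, List.mem_cons] at hz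
      rcases hz with h | hz
      · exact hxa h.symm
      · exact har hz
    exact key z (hrsub z hz) hza hzb hzS y hadj
  -- backward along q.reverse : Walk x a
  have hqall : ∀ z ∈ q.reverse.support, z ∈ S.verts := by
    apply forward_prop q.reverse hqpath.reverse _ hxS
    intro z hz hza hzS y hadj
    have hz' : z ∈ q.support := by rwa [SimpleGraph.Walk.support_reverse, List.mem_reverse] at hz
    have hzb : z ≠ b := fun h => hbq (h ▸ hz')
    exact key z (hqsub z hz') hza hzb hzS y hadj
  intro z hz
  rw [← hspec, SimpleGraph.Walk.mem_support_append_iff] at hz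
  rcases hz with hz | hz
  · exact hqall z (by rwa [SimpleGraph.Walk.support_reverse, List.mem_reverse])
  · exact hrall z hz
end

section
/- Every finite 2-connected simple graph on at least 3 vertices that is not a cycle contains a diamond. -/
open SimpleGraph

variable {V : Type*}

/-- A simple graph is a cycle if it has a cycle passing through every vertex and
using every edge. -/
def SimpleGraph.IsCycleGraph (G : SimpleGraph V) : Prop :=
  ∃ (v : V) (w : G.Walk v v), w.IsCycle ∧ (∀ x : V, x ∈ w.support) ∧
    ∀ e ∈ G.edgeSet, e ∈ w.edges

namespace DiamondAux

open SimpleGraph Walk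

variable {V : Type*} {G : SimpleGraph V}

lemma exists_firstHit {S : Set V} {x y : V} (w : G.Walk x y) :
    y ∈ S → ∃ c, c ∈ S ∧ ∃ p : G.Walk x c, p.support ⊆ w.support ∧
      ∀ z ∈ p.support, z ∈ S → z = c := by
  induction w with
  | nil =>
    intro hy
    refine ⟨_, hy, Walk.nil, by simp, ?_⟩
    intro z hz _
    simpa using hz
  | @cons u b y h q ih =>
    intro hy
    by_cases hu : u ∈ S
    · refine ⟨u, hu, Walk.nil, by simp, ?_⟩
      intro z hz _
      simpa using hz
    · obtain ⟨c, hc, p, hsub, hlast⟩ := ih hy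
      refine ⟨c, hc, Walk.cons h p, ?_, ?_⟩
      · rw [Walk.support_cons, Walk.support_cons]
        exact List.cons_subset_cons _ hsub
      · intro z hz hzS
        rw [Walk.support_cons, List.mem_cons] at hz
        rcases hz with rfl | hz
        · exact absurd hzS hu
        · exact hlast z hz hzS

lemma exists_firstHitPath {S : Set V} {x y : V} (w : G.Walk x y) (hy : y ∈ S) :
    ∃ c, c ∈ S ∧ ∃ p : G.Walk x c, p.IsPath ∧ p.support ⊆ w.support ∧
      ∀ z ∈ p.support, z ∈ S → z = c := by
  classical
  obtain ⟨c, hc, p, hsub, hlast⟩ := exists_firstHit w hy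
  exact ⟨c, hc, p.toPath, (p.toPath).2,
    fun z hz => hsub (p.support_toPath_subset hz),
    fun z hz => hlast z (p.support_toPath_subset hz)⟩

lemma exists_avoid_walk (hcut : ∀ v : V, (G.induce {w | w ≠ v}).Connected)
    {v x y : V} (hx : x ≠ v) (hy : y ≠ v) :
    ∃ p : G.Walk x y, v ∉ p.support := by
  obtain ⟨q⟩ := (hcut v).preconnected ⟨x, hx⟩ ⟨y, hy⟩
  refine ⟨q.map (SimpleGraph.Embedding.induce _).toHom, ?_⟩
  erw [Walk.support_map]
  intro hmem
  obtain ⟨z, hz, hzv⟩ := List.mem_map.mp hmem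
  exact z.2 hzv

lemma exists_adj_of_connected [Fintype V] (hconn : G.Connected)
    (h2 : 2 ≤ Fintype.card V) (u : V) : ∃ w, G.Adj u w := by
  obtain ⟨y, hy⟩ := Fintype.exists_ne_of_one_lt_card (by omega) u
  obtain ⟨p⟩ := hconn.preconnected u y
  cases p with
  | nil => exact absurd rfl hy
  | cons h q => exact ⟨_, h⟩

lemma exists_cycle' [Fintype V] (hcard : 3 ≤ Fintype.card V) (hconn : G.Connected)
    (hcut : ∀ v : V, (G.induce {w | w ≠ v}).Connected) :
    ∃ (a : V) (C : G.Walk a a), C.IsCycle := by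
  have h2 : 2 ≤ Fintype.card V := by omega
  have hne : Nonempty V := Fintype.card_pos_iff.mp (by omega)
  obtain ⟨u⟩ := hne
  obtain ⟨w, huw⟩ := exists_adj_of_connected hconn h2 u
  have huw' : u ≠ w := huw.ne
  -- a vertex distinct from u and w
  have hz : ∃ z : V, z ≠ u ∧ z ≠ w := by
    by_contra hcon
    push_neg at hcon
    classical
    have hsub : (Finset.univ : Finset V) ⊆ {u, w} := by
      intro z _
      by_cases h : z = u
      · simp [h]
      · simp [hcon z h]
    have h1 := Finset.card_le_card hsub
    have h3 : ({u, w} : Finset V).card ≤ 2 :=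
      (Finset.card_insert_le _ _).trans (by simp)
    rw [Finset.card_univ] at h1
    omega
  obtain ⟨z, hzu, hzw⟩ := hz
  -- a second neighbor y ≠ w of u
  obtain ⟨q⟩ := (hcut w).preconnected ⟨u, huw'⟩ ⟨z, hzw⟩
  have hqne : ¬ q.Nil := by
    refine Walk.not_nil_of_ne ?_
    simp [Subtype.ext_iff]
    exact fun h => hzu h.symm
  obtain ⟨y', hadj', q', hq'⟩ := Walk.not_nil_iff.mp hqne
  have hyadj : G.Adj u y'.1 := hadj'
  have hyw : y'.1 ≠ w := y'.2
  have hyu : y'.1 ≠ u := hyadj.ne'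
  -- path from y' to w avoiding u
  obtain ⟨r, hur⟩ := exists_avoid_walk hcut (v := u) hyu huw'.symm
  classical
  set p := r.toPath.1 with hp
  have hppath : p.IsPath := r.toPath.2
  have hup : u ∉ p.support := fun h => hur (r.support_toPath_subset h)
  -- build the cycle
  refine ⟨u, Walk.cons hyadj (p.append (Walk.cons huw.symm Walk.nil)), ?_⟩
  have hyw2 : y'.1 ≠ w := hyw
  constructor
  · constructor
    · constructor
      rw [Walk.edges_cons, Walk.edges_append, Walk.edges_cons, Walk.edges_nil]
      rw [List.nodup_cons, List.nodup_append]
      refine ⟨?_, hppath.1.1, by simp, ?_⟩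
      · intro hmem
        rw [List.mem_append] at hmem
        rcases hmem with hmem | hmem
        · exact hup (p.fst_mem_support_of_mem_edges hmem)
        · rw [List.mem_singleton, Sym2.eq_iff] at hmem
          rcases hmem with ⟨h1, h2⟩ | ⟨h1, h2⟩
          · exact huw' h1
          · exact hyw2 h2
      · intro e he
        intro b hb
        rw [List.mem_singleton] at hb
        subst hb
        intro heq
        subst heq
        exact hup (p.snd_mem_support_of_mem_edges he)
    · simp
  · rw [Walk.support_cons, List.tail_cons, Walk.support_append, Walk.support_cons,
      Walk.support_nil, List.tail_cons]
    rw [List.nodup_append]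
    exact ⟨hppath.2, by simp, fun x hx y hy hxy => hup (by rw [List.mem_singleton] at hy; subst hy; subst hxy; exact hx)⟩

lemma mem_tail_of_closed {v : V} (w : G.Walk v v) (hw : ¬ w.Nil) : v ∈ w.support.tail := by
  cases w with
  | nil => simp at hw
  | cons h q => simpa using q.end_mem_support

lemma theta {a c : V} (C : G.Walk a a) (hC : C.IsCycle) (hc : c ∈ C.support)
    (hac : a ≠ c) (P : G.Walk a c) (hP : P.IsPath)
    (hPint : ∀ x ∈ P.support, x ∈ C.support → x = a ∨ x = c)
    (hPe : ∀ e ∈ P.edges, e ∉ C.edges) : Nonempty G.Diamond := by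
  classical
  set q₁ := C.takeUntil c hc with hq₁def
  set t := C.dropUntil c hc with htdef
  have hspec : q₁.append t = C := C.take_spec hc
  have htail : C.support.tail = q₁.support.tail ++ t.support.tail := by
    conv_lhs => rw [← hspec]
    exact Walk.tail_support_append q₁ t
  have hnd := hC.2
  rw [htail, List.nodup_append] at hnd
  obtain ⟨hnd1, hnd2, hdisj⟩ := hnd
  have hq₁supp : q₁.support = a :: q₁.support.tail := q₁.support_eq_cons
  have htsupp : t.support = c :: t.support.tail := t.support_eq_cons
  -- a is in t's tail, hence not in q₁'s tail
  have hat : a ∈ t.support.tail := by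
    have : a ∈ t.support := t.end_mem_support
    rw [htsupp, List.mem_cons] at this
    exact this.resolve_left hac
  have haq₁ : a ∉ q₁.support.tail := fun h => hdisj _ h _ hat rfl
  -- c is in q₁'s tail, hence not in t's tail
  have hcq₁ : c ∈ q₁.support.tail := by
    have : c ∈ q₁.support := q₁.end_mem_support
    rw [hq₁supp, List.mem_cons] at this
    exact this.resolve_left (fun h => hac h.symm)
  have hct : c ∉ t.support.tail := fun h => hdisj _ hcq₁ _ h rfl
  have hq₁path : q₁.IsPath := by
    apply Walk.IsPath.mk'
    rw [hq₁supp]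
    exact List.nodup_cons.mpr ⟨haq₁, hnd1⟩
  have htpath : t.IsPath := by
    apply Walk.IsPath.mk'
    rw [htsupp]
    exact List.nodup_cons.mpr ⟨hct, hnd2⟩
  set q₂ := t.reverse with hq₂def
  have hq₂path : q₂.IsPath := htpath.reverse
  have hq₂mem : ∀ x, x ∈ q₂.support ↔ x ∈ t.support := by
    intro x
    rw [hq₂def, Walk.support_reverse, List.mem_reverse]
  -- edges decomposition
  have hedges : C.edges = q₁.edges ++ t.edges := by
    conv_lhs => rw [← hspec]
    exact Walk.edges_append q₁ t
  have hndE := hC.1.1.1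
  rw [hedges, List.nodup_append] at hndE
  obtain ⟨hndE1, hndE2, hdisjE⟩ := hndE
  -- nonempty edges
  have hq₁ne : ¬ q₁.Nil := Walk.not_nil_of_ne hac
  obtain ⟨y₁, h₁, r₁, hr₁⟩ := Walk.not_nil_iff.mp hq₁ne
  have he₁ : s(a, y₁) ∈ q₁.edges := by rw [hr₁]; simp
  have htne : ¬ t.Nil := Walk.not_nil_of_ne (fun h => hac h.symm)
  obtain ⟨y₂, h₂, r₂, hr₂⟩ := Walk.not_nil_iff.mp htne
  have he₂ : s(c, y₂) ∈ t.edges := by rw [hr₂]; simp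
  have he₂q₂ : s(c, y₂) ∈ q₂.edges := by
    rw [hq₂def, Walk.edges_reverse, List.mem_reverse]; exact he₂
  have hq₁C : q₁.edges ⊆ C.edges := by rw [hedges]; exact List.subset_append_left _ _
  have htC : t.edges ⊆ C.edges := by rw [hedges]; exact List.subset_append_right _ _
  refine ⟨⟨a, c, hac, P, q₁, q₂, hP, hq₁path, hq₂path, ?_, ?_, ?_, ?_, ?_, ?_⟩⟩
  · -- P ≠ q₁
    intro h
    exact hPe _ (h ▸ he₁) (hq₁C he₁)
  · -- P ≠ q₂
    intro h
    exact hPe _ (h ▸ he₂q₂) (htC he₂)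
  · -- q₁ ≠ q₂
    intro h
    have hmem : s(c, y₂) ∈ q₁.edges := by
      rw [h, hq₂def, Walk.edges_reverse, List.mem_reverse]; exact he₂
    exact hdisjE _ hmem _ he₂ rfl
  · -- P vs q₁
    intro x hx hx₁
    exact hPint x hx (C.support_takeUntil_subset hc hx₁)
  · -- P vs q₂
    intro x hx hx₂
    exact hPint x hx (C.support_dropUntil_subset hc ((hq₂mem x).mp hx₂))
  · -- q₁ vs q₂
    intro x hx₁ hx₂
    rw [hq₂mem x, htsupp, List.mem_cons] at hx₂
    rcases hx₂ with rfl | hx₂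
    · exact Or.inr rfl
    rw [hq₁supp, List.mem_cons] at hx₁
    rcases hx₁ with rfl | hx₁
    · exact Or.inl rfl
    exact absurd hx₂ (fun h => hdisj _ hx₁ _ h rfl)

lemma exists_ear (hconn : G.Connected)
    (hcut : ∀ v : V, (G.induce {w | w ≠ v}).Connected)
    (hnotcycle : ¬ G.IsCycleGraph)
    {a : V} (C : G.Walk a a) (hC : C.IsCycle) :
    ∃ (u v : V), u ∈ C.support ∧ v ∈ C.support ∧ u ≠ v ∧ ∃ P : G.Walk u v, P.IsPath ∧
      (∀ x ∈ P.support, x ∈ C.support → x = u ∨ x = v) ∧ ∀ e ∈ P.edges, e ∉ C.edges := by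
  classical
  -- Step 1: an edge not on C with at least one endpoint on C
  have step1 : ∃ x₀ b, G.Adj x₀ b ∧ x₀ ∈ C.support ∧ s(x₀, b) ∉ C.edges := by
    by_cases hall : ∀ z : V, z ∈ C.support
    · have : ¬ ∀ e ∈ G.edgeSet, e ∈ C.edges := by
        intro h
        exact hnotcycle ⟨a, C, hC, hall, h⟩
      push_neg at this
      obtain ⟨e, he, hne⟩ := this
      induction e using Sym2.ind with
      | _ x₀ b =>
        exact ⟨x₀, b, he, hall x₀, hne⟩
    · push_neg at hall
      obtain ⟨z, hz⟩ := hall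
      obtain ⟨w₀⟩ := hconn.preconnected z a
      have haS : a ∈ {x | x ∈ C.support} := C.start_mem_support
      obtain ⟨c, hcS, p, hppath, hpsub, hplast⟩ := exists_firstHitPath (S := {x | x ∈ C.support}) w₀ haS
      have hzc : z ≠ c := fun h => hz (h ▸ hcS)
      have hpne : ¬ p.reverse.Nil := Walk.not_nil_of_ne (fun h => hzc h.symm)
      obtain ⟨y, hadj, r, hr⟩ := Walk.not_nil_iff.mp hpne
      have hyr : y ∈ r.support := r.start_mem_support
      have hyp : y ∈ p.support := by
        have : y ∈ p.reverse.support := by rw [hr]; simp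
        rwa [Walk.support_reverse, List.mem_reverse] at this
      have hyc : y ≠ c := by
        have hrev : p.reverse.IsPath := hppath.reverse
        have hnd := hrev.2
        rw [hr, Walk.support_cons] at hnd
        intro h
        subst h
        exact (List.nodup_cons.mp hnd).1 hyr
      have hyS : y ∉ C.support := by
        intro h
        exact hyc (hplast y hyp h)
      refine ⟨c, y, hadj, hcS, ?_⟩
      intro hmem
      exact hyS (C.snd_mem_support_of_mem_edges hmem)
  obtain ⟨x₀, b, hadj, hx₀, hne⟩ := step1
  by_cases hb : b ∈ C.support
  · -- chord
    refine ⟨x₀, b, hx₀, hb, hadj.ne, Walk.cons hadj Walk.nil, ?_, ?_, ?_⟩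
    · simp [Walk.cons_isPath_iff, hadj.ne]
    · intro x hx _
      simpa using hx
    · intro e he
      rw [Walk.edges_cons, Walk.edges_nil, List.mem_singleton] at he
      subst he
      exact hne
  · -- ear from x₀ through b back to C
    have hbx₀ : b ≠ x₀ := fun h => hb (h ▸ hx₀)
    -- a vertex d on C distinct from x₀
    have hd : ∃ d, d ∈ C.support ∧ d ≠ x₀ := by
      have hlen : 2 ≤ C.support.tail.length := by
        have h3 := hC.three_le_length
        have h4 : C.support.length = C.length + 1 := C.length_support
        rw [List.length_tail, h4]
        omega
      have hnd := hC.2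
      rcases hlt : C.support.tail with _ | ⟨d₁, tl⟩
      · rw [hlt] at hlen; simp at hlen
      rcases hlt2 : tl with _ | ⟨d₂, tl₂⟩
      · rw [hlt, hlt2] at hlen; simp at hlen
      rw [hlt, hlt2] at hnd
      have hmem₁ : d₁ ∈ C.support := by
        apply List.mem_of_mem_tail; rw [hlt]; simp
      have hmem₂ : d₂ ∈ C.support := by
        apply List.mem_of_mem_tail; rw [hlt, hlt2]; simp
      by_cases h1 : d₁ = x₀
      · refine ⟨d₂, hmem₂, ?_⟩
        intro h2
        have := (List.nodup_cons.mp hnd).1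
        rw [h1, ← h2] at this
        exact this (by simp)
      · exact ⟨d₁, hmem₁, h1⟩
    obtain ⟨d, hdC, hdx₀⟩ := hd
    obtain ⟨W, hW⟩ := exists_avoid_walk hcut (v := x₀) hbx₀ hdx₀
    have hdS : d ∈ {x | x ∈ C.support} := hdC
    obtain ⟨c', hc'S, p, hppath, hpsub, hplast⟩ :=
      exists_firstHitPath (S := {x | x ∈ C.support}) W hdS
    have hx₀p : x₀ ∉ p.support := fun h => hW (hpsub h)
    have hx₀c' : x₀ ≠ c' := fun h => hx₀p (h ▸ p.end_mem_support)
    refine ⟨x₀, c', hx₀, hc'S, hx₀c', Walk.cons hadj p, ?_, ?_, ?_⟩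
    · rw [Walk.cons_isPath_iff]
      exact ⟨hppath, hx₀p⟩
    · intro x hx hxC
      rw [Walk.support_cons, List.mem_cons] at hx
      rcases hx with rfl | hx
      · exact Or.inl rfl
      · exact Or.inr (hplast x hx hxC)
    · intro e he
      rw [Walk.edges_cons, List.mem_cons] at he
      rcases he with rfl | he
      · exact hne
      · induction e using Sym2.ind with
        | _ α β =>
          intro heC
          have hαβ : α ≠ β := (p.adj_of_mem_edges he).ne
          have hα : α ∈ p.support := p.fst_mem_support_of_mem_edges he
          have hβ : β ∈ p.support := p.snd_mem_support_of_mem_edges he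
          have hαC : α ∈ C.support := C.fst_mem_support_of_mem_edges heC
          have hβC : β ∈ C.support := C.snd_mem_support_of_mem_edges heC
          have := hplast α hα hαC
          have := hplast β hβ hβC
          exact hαβ (‹α = c'›.trans ‹β = c'›.symm)

end DiamondAux

/-- Every finite 2-connected simple graph on at least 3 vertices that is not a cycle
contains a diamond. -/
theorem diamond_of_two_connected_not_cycle (V : Type*) [Fintype V]
    (G : SimpleGraph V)
    (hcard : 3 ≤ Fintype.card V) (hconn : G.Connected)
    (hcut : ∀ v : V, (G.induce {w | w ≠ v}).Connected)
    (hnotcycle : ¬ G.IsCycleGraph) :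
    Nonempty G.Diamond := by
  classical
  obtain ⟨a, C, hC⟩ := DiamondAux.exists_cycle' hcard hconn hcut
  obtain ⟨u, v, hu, hv, huv, P, hP, hPint, hPe⟩ :=
    DiamondAux.exists_ear hconn hcut hnotcycle C hC
  set C' := C.rotate u hu with hC'def
  have hC' : C'.IsCycle := hC.rotate hu
  have hCnil : ¬ C.Nil := by
    have := hC.three_le_length
    rw [Walk.nil_iff_length_eq]
    omega
  have hC'nil : ¬ C'.Nil := by
    have := hC'.three_le_length
    rw [Walk.nil_iff_length_eq]
    omega
  have hrot := C.support_rotate u hu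
  have hmem : ∀ x, x ∈ C'.support ↔ x ∈ C.support := by
    intro x
    constructor
    · intro hx
      rw [Walk.support_eq_cons, List.mem_cons] at hx
      rcases hx with rfl | hx
      · exact hu
      · exact List.mem_of_mem_tail (hrot.mem_iff.mp hx)
    · intro hx
      rw [Walk.support_eq_cons, List.mem_cons] at hx
      rcases hx with rfl | hx
      · exact List.mem_of_mem_tail (hrot.mem_iff.mpr (DiamondAux.mem_tail_of_closed C hCnil))
      · rw [Walk.support_eq_cons, List.mem_cons]
        by_cases hxu : x = u
        · exact Or.inl hxu
        · exact Or.inr (hrot.mem_iff.mpr hx)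
  have hmemE : ∀ e, e ∈ C'.edges ↔ e ∈ C.edges := fun e => (C.rotate_edges u hu).mem_iff
  exact DiamondAux.theta C' hC' ((hmem v).mpr hv) huv P hP
    (fun x hx hxC => hPint x hx ((hmem x).mp hxC))
    (fun e he hce => hPe e he ((hmemE e).mp hce))
end
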